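/- Define Γ^{0n} := {T ∈ 𝒢^× : T (𝒢^0 + 𝒢^n) T^{-1} ⊆ 𝒢^0 + 𝒢^n} and Γ̌^{0n} := {T ∈ 𝒢^× : T̂ (𝒢^0 + 𝒢^n) T^{-1} ⊆ 𝒢^0 + 𝒢^n}. Then: Γ^{0n} = 𝒢^× if n is odd and Γ^{0n} = (𝒢^{(0)×} ∪ 𝒢^{(1)×})(𝒢^0 + rad 𝒢)^× if n is even; and Γ̌^{0n} = (𝒢^{(0)×} ∪ 𝒢^{(1)×})(𝒢^0 + 𝒢^n)^× if n is odd and Γ̌^{0n} = 𝒢^{(0)×} ∪ 𝒢^{(1)×} if n is even. -/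

import Mathlib

open Pointwise

noncomputable section

namespace ClGA

variable (𝔽 : Type*) [RCLike 𝔽] (p q r : ℕ)

/-- The diagonal weights: `p` ones, `q` minus-ones, `r` zeros. -/
def w : Fin (p + q + r) → 𝔽 := fun i =>
  if (i : ℕ) < p then 1 else if (i : ℕ) < p + q then -1 else 0

/-- The quadratic form on `𝔽^n` whose Gram matrix is `diag(1,…,1,−1,…,−1,0,…,0)`. -/
def Q : QuadraticForm 𝔽 (Fin (p + q + r) → 𝔽) :=
  QuadraticMap.weightedSumSquares 𝔽 (w 𝔽 p q r)

/-- The degenerate Clifford geometric algebra `𝒢 = 𝒢_{p,q,r}`. -/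
abbrev G := CliffordAlgebra (Q 𝔽 p q r)

/-- The generators `e_a`, `a = 1, …, n`. -/
def e (a : Fin (p + q + r)) : G 𝔽 p q r :=
  CliffordAlgebra.ι (Q 𝔽 p q r) (Pi.single a 1)

/-- The even subspace `𝒢^{(0)}`: the `+1`-eigenspace of the grade involution. -/
def Geven : Submodule 𝔽 (G 𝔽 p q r) where
  carrier := {x | CliffordAlgebra.involute x = x}
  add_mem' := by
    intro a b ha hb
    simp only [Set.mem_setOf_eq, map_add] at ha hb ⊢
    rw [ha, hb]
  zero_mem' := by simp
  smul_mem' := by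
    intro c x hx
    simp only [Set.mem_setOf_eq, map_smul] at hx ⊢
    rw [hx]

/-- The odd subspace `𝒢^{(1)}`: the `−1`-eigenspace of the grade involution. -/
def Godd : Submodule 𝔽 (G 𝔽 p q r) where
  carrier := {x | CliffordAlgebra.involute x = -x}
  add_mem' := by
    intro a b ha hb
    simp only [Set.mem_setOf_eq, map_add] at ha hb ⊢
    rw [ha, hb, neg_add]
  zero_mem' := by simp
  smul_mem' := by
    intro c x hx
    simp only [Set.mem_setOf_eq, map_smul] at hx ⊢
    rw [hx, smul_neg]

/-- The grade-1 subspace `𝒢^1`, the span of the generators. -/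
def G1 : Submodule 𝔽 (G 𝔽 p q r) := Submodule.span 𝔽 (Set.range (e 𝔽 p q r))

/-- The scalar (grade-0) subspace `𝒢^0 = 𝔽·1`. -/
def G0 : Submodule 𝔽 (G 𝔽 p q r) := Submodule.span 𝔽 {(1 : G 𝔽 p q r)}

/-- The element `e_{1…n} = e_1 e_2 ⋯ e_n`. -/
def eTop : G 𝔽 p q r := (List.ofFn (e 𝔽 p q r)).prod

/-- The grade-`n` subspace `𝒢^n = 𝔽·e_{1…n}`. -/
def Gn : Submodule 𝔽 (G 𝔽 p q r) := Submodule.span 𝔽 {eTop 𝔽 p q r}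

/-- The Grassmann subalgebra `Λ_r` generated by the null generators. -/
def Λr : Subalgebra 𝔽 (G 𝔽 p q r) :=
  Algebra.adjoin 𝔽 {x | ∃ a : Fin (p + q + r), p + q ≤ (a : ℕ) ∧ x = e 𝔽 p q r a}

/-- `Λ_r` viewed as a subspace of `𝒢`. -/
def Λrs : Submodule 𝔽 (G 𝔽 p q r) := Subalgebra.toSubmodule (Λr 𝔽 p q r)

/-- The even part `Λ_r^{(0)} = Λ_r ∩ 𝒢^{(0)}`. -/
def Λr0 : Submodule 𝔽 (G 𝔽 p q r) := Λrs 𝔽 p q r ⊓ Geven 𝔽 p q r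

/-- The Jacobson radical `rad 𝒢` of `𝒢`: the two-sided ideal generated by the
null generators. -/
def radG : Submodule 𝔽 (G 𝔽 p q r) :=
  Submodule.span 𝔽 {x | ∃ (u v : G 𝔽 p q r) (a : Fin (p + q + r)),
    p + q ≤ (a : ℕ) ∧ x = u * e 𝔽 p q r a * v}

/-- `rad 𝒢^{(0)} = rad 𝒢 ∩ 𝒢^{(0)}`. -/
def radG0 : Submodule 𝔽 (G 𝔽 p q r) := radG 𝔽 p q r ⊓ Geven 𝔽 p q r

/-- For a subset `S ⊆ 𝒢`, `S^×` denotes those elements of `S` invertible in `𝒢`. -/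
def ux (S : Set (G 𝔽 p q r)) : Set (G 𝔽 p q r) := {x ∈ S | IsUnit x}

/-- `𝒢^{(0)×} ∪ 𝒢^{(1)×}` (the group `P^±_{p,q,r}`). -/
def Epm : Set (G 𝔽 p q r) :=
  ux 𝔽 p q r ↑(Geven 𝔽 p q r) ∪ ux 𝔽 p q r ↑(Godd 𝔽 p q r)

/-- `(T⁻¹)^̂ · T`, the grade involution of the inverse times `T`. -/
def tw (T : G 𝔽 p q r) : G 𝔽 p q r :=
  CliffordAlgebra.involute (Ring.inverse T) * T

/-- The invertible elements `T` with `T W T⁻¹ ⊆ W` (adjoint representation). -/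
def gammaAd (W : Submodule 𝔽 (G 𝔽 p q r)) : Set (G 𝔽 p q r) :=
  {T | IsUnit T ∧ ∀ U ∈ W, T * U * Ring.inverse T ∈ W}

/-- The invertible elements `T` with `T̂ W T⁻¹ ⊆ W` (twisted adjoint representation). -/
def gammaTw (W : Submodule 𝔽 (G 𝔽 p q r)) : Set (G 𝔽 p q r) :=
  {T | IsUnit T ∧ ∀ U ∈ W, CliffordAlgebra.involute T * U * Ring.inverse T ∈ W}


section lemmas
open CliffordAlgebra
variable {𝔽 : Type*} [RCLike 𝔽] {p q r : ℕ}

lemma Q_apply (v : Fin (p+q+r) → 𝔽) : Q 𝔽 p q r v = ∑ i, w 𝔽 p q r i * (v i * v i) := by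
  simp [Q, QuadraticMap.weightedSumSquares_apply, smul_eq_mul]

lemma w_mul_self (a : Fin (p+q+r)) (ha : (a:ℕ) < p + q) : w 𝔽 p q r a * w 𝔽 p q r a = 1 := by
  unfold w; split_ifs <;> simp

lemma w_null (a : Fin (p+q+r)) (ha : p + q ≤ (a:ℕ)) : w 𝔽 p q r a = (0:𝔽) := by
  unfold w; split_ifs with h1 h2
  · omega
  · omega
  · rfl

lemma Q_single (a : Fin (p+q+r)) : Q 𝔽 p q r (Pi.single a 1) = w 𝔽 p q r a := by
  rw [Q_apply, Finset.sum_eq_single a]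
  · simp
  · intro b _ hb; simp [Pi.single_apply, hb]
  · simp

lemma polar_single (a : Fin (p+q+r)) (v : Fin (p+q+r) → 𝔽) :
    QuadraticMap.polar (Q 𝔽 p q r) (Pi.single a 1) v = 2 * w 𝔽 p q r a * v a := by
  have h : ∀ x y : Fin (p+q+r) → 𝔽,
      Q 𝔽 p q r (x + y) = ∑ i, w 𝔽 p q r i * ((x i + y i) * (x i + y i)) := fun x y => Q_apply _
  simp only [QuadraticMap.polar, h, Q_apply]
  rw [← Finset.sum_sub_distrib, ← Finset.sum_sub_distrib, Finset.sum_eq_single a]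
  · simp only [Pi.single_eq_same]; ring
  · intro b _ hb
    simp only [Pi.single_apply, if_neg hb]; ring
  · simp

lemma isOrtho_single {a : Fin (p+q+r)} {v : Fin (p+q+r) → 𝔽}
    (h : w 𝔽 p q r a * v a = 0) :
    QuadraticMap.IsOrtho (Q 𝔽 p q r) (Pi.single a 1) v := by
  rw [QuadraticMap.isOrtho_def]
  have h2 := polar_single a v
  rw [mul_assoc, h, mul_zero] at h2
  unfold QuadraticMap.polar at h2
  linear_combination h2

lemma e_sq (a : Fin (p+q+r)) :
    e 𝔽 p q r a * e 𝔽 p q r a = algebraMap 𝔽 _ (w 𝔽 p q r a) := by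
  rw [e, ι_sq_scalar, Q_single]

lemma e_anticomm {a b : Fin (p+q+r)} (h : b ≠ a) :
    e 𝔽 p q r a * e 𝔽 p q r b = -(e 𝔽 p q r b * e 𝔽 p q r a) := by
  refine ι_mul_ι_comm_of_isOrtho (isOrtho_single ?_)
  simp [Pi.single_apply, h]

lemma e_null_mul_ι {a : Fin (p+q+r)} (ha : p + q ≤ (a:ℕ)) (v : Fin (p+q+r) → 𝔽) :
    e 𝔽 p q r a * ι (Q 𝔽 p q r) v = -(ι (Q 𝔽 p q r) v * e 𝔽 p q r a) := by
  refine ι_mul_ι_comm_of_isOrtho (isOrtho_single ?_)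
  rw [w_null a ha, zero_mul]

lemma e_isUnit {a : Fin (p+q+r)} (ha : (a:ℕ) < p + q) : IsUnit (e 𝔽 p q r a) := by
  refine ⟨⟨e 𝔽 p q r a, w 𝔽 p q r a • e 𝔽 p q r a, ?_, ?_⟩, rfl⟩
  · rw [mul_smul_comm, e_sq, Algebra.smul_def, ← map_mul, w_mul_self a ha, map_one]
  · rw [smul_mul_assoc, e_sq, Algebra.smul_def, ← map_mul, w_mul_self a ha, map_one]

lemma ι_eq_sum (v : Fin (p+q+r) → 𝔽) :
    ι (Q 𝔽 p q r) v = ∑ a, v a • e 𝔽 p q r a := by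
  have hv : v = ∑ a, v a • (Pi.single a (1:𝔽) : Fin (p+q+r) → 𝔽) := by
    funext j
    rw [Finset.sum_apply, Finset.sum_eq_single j]
    · simp
    · intro b _ hb; simp [Pi.single_apply, Ne.symm hb]
    · simp
  conv_lhs => rw [hv]
  rw [map_sum]
  refine Finset.sum_congr rfl fun a _ => ?_
  rw [map_smul, e]

end lemmas
section lemmas2
open CliffordAlgebra
variable {𝔽 : Type*} [RCLike 𝔽] {p q r : ℕ}

lemma e_sq' (a : Fin (p+q+r)) :
    e 𝔽 p q r a * e 𝔽 p q r a = (w 𝔽 p q r a) • (1 : G 𝔽 p q r) := by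
  rw [e_sq, Algebra.algebraMap_eq_smul_one]

/-- If `x` anticommutes with all generators, then `x * y = involute y * x`. -/
lemma mul_super {x : G 𝔽 p q r} (h : ∀ a, x * e 𝔽 p q r a = -(e 𝔽 p q r a * x)) :
    ∀ y, x * y = involute y * x := by
  intro y
  induction y using CliffordAlgebra.induction with
  | algebraMap c => rw [AlgHom.commutes, Algebra.commutes]
  | ι v =>
    rw [involute_ι, ι_eq_sum, Finset.mul_sum, neg_mul, Finset.sum_mul, ← Finset.sum_neg_distrib]
    refine Finset.sum_congr rfl fun a _ => ?_
    rw [mul_smul_comm, h a, smul_neg, smul_mul_assoc]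
  | mul y z hy hz => rw [map_mul, ← mul_assoc, hy, mul_assoc, hz, ← mul_assoc]
  | add y z hy hz => rw [map_add, mul_add, add_mul, hy, hz]

/-- If `x` commutes with all generators, then `x` is central. -/
lemma mul_central {x : G 𝔽 p q r} (h : ∀ a, x * e 𝔽 p q r a = e 𝔽 p q r a * x) :
    ∀ y, x * y = y * x := by
  intro y
  induction y using CliffordAlgebra.induction with
  | algebraMap c => rw [Algebra.commutes, ← Algebra.commutes c x]
  | ι v =>
    rw [ι_eq_sum, Finset.mul_sum, Finset.sum_mul]
    refine Finset.sum_congr rfl fun a _ => ?_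
    rw [mul_smul_comm, h a, smul_mul_assoc]
  | mul y z hy hz => rw [← mul_assoc, hy, mul_assoc, hz, ← mul_assoc]
  | add y z hy hz => rw [mul_add, add_mul, hy, hz]

lemma e_null_mul {a : Fin (p+q+r)} (ha : p + q ≤ (a:ℕ)) (y : G 𝔽 p q r) :
    e 𝔽 p q r a * y = involute y * e 𝔽 p q r a := by
  refine mul_super (fun b => ?_) y
  by_cases hab : b = a
  · subst hab
    rw [e_sq, w_null b ha, map_zero, neg_zero]
  · exact e_anticomm hab

/-- `eProd l = e_{l₁} ⋯ e_{l_k}`. -/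
def eProd (𝔽 : Type*) [RCLike 𝔽] (p q r : ℕ) (l : List (Fin (p+q+r))) : G 𝔽 p q r :=
  (l.map (e 𝔽 p q r)).prod

@[simp] lemma eProd_nil : eProd 𝔽 p q r [] = 1 := rfl

@[simp] lemma eProd_cons (a : Fin (p+q+r)) (l : List (Fin (p+q+r))) :
    eProd 𝔽 p q r (a :: l) = e 𝔽 p q r a * eProd 𝔽 p q r l := by
  simp [eProd]

lemma eProd_append (l₁ l₂ : List (Fin (p+q+r))) :
    eProd 𝔽 p q r (l₁ ++ l₂) = eProd 𝔽 p q r l₁ * eProd 𝔽 p q r l₂ := by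
  simp [eProd]

lemma e_mul_eProd_not_mem {a : Fin (p+q+r)} {l : List (Fin (p+q+r))} (h : a ∉ l) :
    e 𝔽 p q r a * eProd 𝔽 p q r l = ((-1:𝔽) ^ l.length) • (eProd 𝔽 p q r l * e 𝔽 p q r a) := by
  induction l with
  | nil => simp
  | cons b l ih =>
    have hab : b ≠ a := fun hh => h (hh ▸ (List.mem_cons_self : b ∈ b :: l))
    have hal : a ∉ l := fun hh => h (List.mem_cons_of_mem b hh)
    rw [eProd_cons, ← mul_assoc, e_anticomm hab, neg_mul, mul_assoc, ih hal]
    simp only [List.length_cons, pow_succ, mul_smul_comm, smul_smul, mul_assoc,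
      mul_neg_one, neg_smul, neg_neg, smul_mul_assoc]

lemma eProd_mul_e_not_mem {a : Fin (p+q+r)} {l : List (Fin (p+q+r))} (h : a ∉ l) :
    eProd 𝔽 p q r l * e 𝔽 p q r a = ((-1:𝔽) ^ l.length) • (e 𝔽 p q r a * eProd 𝔽 p q r l) := by
  rw [e_mul_eProd_not_mem h, smul_smul, ← pow_add, ← two_mul, pow_mul, neg_one_sq, one_pow,
    one_smul]

lemma e_null_mul_eProd_mem {a : Fin (p+q+r)} (ha : p + q ≤ (a:ℕ)) {l : List (Fin (p+q+r))}
    (h : a ∈ l) : e 𝔽 p q r a * eProd 𝔽 p q r l = 0 := by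
  induction l with
  | nil => simp at h
  | cons b l ih =>
    rw [eProd_cons, ← mul_assoc]
    by_cases hab : b = a
    · subst hab
      rw [e_sq, w_null b ha, map_zero, zero_mul]
    · rw [e_anticomm hab, neg_mul, mul_assoc,
        ih ((List.mem_cons.mp h).resolve_left (fun hh => hab hh.symm)), mul_zero, neg_zero]

lemma involute_eProd (l : List (Fin (p+q+r))) :
    involute (eProd 𝔽 p q r l) = ((-1:𝔽) ^ l.length) • eProd 𝔽 p q r l := by
  induction l with
  | nil => simp
  | cons b l ih =>
    rw [eProd_cons, map_mul, ih, e, involute_ι, ← e]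
    simp only [List.length_cons, pow_succ, neg_mul, mul_neg_one, neg_smul, mul_smul_comm,
      smul_mul_assoc, neg_neg, smul_smul, smul_neg]

lemma eProd_sq {l : List (Fin (p+q+r))} (h : l.Nodup) :
    ∃ c : 𝔽, eProd 𝔽 p q r l * eProd 𝔽 p q r l = c • 1 := by
  induction l with
  | nil => exact ⟨1, by simp⟩
  | cons b l ih =>
    obtain ⟨c, hc⟩ := ih (List.nodup_cons.mp h).2
    have hb : b ∉ l := (List.nodup_cons.mp h).1
    refine ⟨(-1:𝔽)^l.length * (w 𝔽 p q r b * c), ?_⟩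
    rw [eProd_cons, mul_assoc, ← mul_assoc (eProd 𝔽 p q r l), eProd_mul_e_not_mem hb,
      smul_mul_assoc, mul_smul_comm]
    rw [mul_assoc (e 𝔽 p q r b) (eProd 𝔽 p q r l), hc, mul_smul_comm, mul_one,
      mul_smul_comm, e_sq', smul_smul, smul_smul]
    congr 1
    ring

end lemmas2
section lemmas3
open CliffordAlgebra
variable {𝔽 : Type*} [RCLike 𝔽] {p q r : ℕ}

lemma e_move {a : Fin (p+q+r)} {l : List (Fin (p+q+r))} (h : a ∉ l) (z : G 𝔽 p q r) :
    e 𝔽 p q r a * (eProd 𝔽 p q r l * z)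
      = ((-1:𝔽)^l.length) • (eProd 𝔽 p q r l * (e 𝔽 p q r a * z)) := by
  rw [← mul_assoc, e_mul_eProd_not_mem h, smul_mul_assoc, mul_assoc]

lemma eTop_eq : eTop 𝔽 p q r = eProd 𝔽 p q r (List.finRange (p+q+r)) := by
  rw [eTop, eProd, List.ofFn_eq_map]

lemma e_mul_eTop (a : Fin (p+q+r)) :
    e 𝔽 p q r a * eTop 𝔽 p q r
      = -(((-1:𝔽) ^ (p+q+r)) • (eTop 𝔽 p q r * e 𝔽 p q r a)) := by
  classical
  obtain ⟨l₁, l₂, hl, h1, h2⟩ :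
      ∃ l₁ l₂, List.finRange (p+q+r) = l₁ ++ a :: l₂ ∧ a ∉ l₁ ∧ a ∉ l₂ := by
    have hmem := List.mem_finRange a
    obtain ⟨l₁, l₂, hl⟩ := List.append_of_mem hmem
    have hnd : (List.finRange (p+q+r)).Nodup := List.nodup_finRange _
    rw [hl] at hnd
    have h2 := List.Nodup.of_append_right hnd
    exact ⟨l₁, l₂, hl, fun hc => (List.disjoint_of_nodup_append hnd) hc
      (List.mem_cons_self : a ∈ a :: l₂), (List.nodup_cons.mp h2).1⟩
  have hlen : l₁.length + l₂.length + 1 = p + q + r := by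
    have := congrArg List.length hl
    simp at this
    omega
  have L : e 𝔽 p q r a * eTop 𝔽 p q r
      = ((-1:𝔽)^l₁.length * w 𝔽 p q r a) • (eProd 𝔽 p q r l₁ * eProd 𝔽 p q r l₂) := by
    rw [eTop_eq, hl, eProd_append, eProd_cons, e_move h1,
      ← mul_assoc (e 𝔽 p q r a) (e 𝔽 p q r a) (eProd 𝔽 p q r l₂), e_sq', smul_mul_assoc,
      one_mul, mul_smul_comm, smul_smul]
  have R : eTop 𝔽 p q r * e 𝔽 p q r a
      = ((-1:𝔽)^l₂.length * w 𝔽 p q r a) • (eProd 𝔽 p q r l₁ * eProd 𝔽 p q r l₂) := by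
    rw [eTop_eq, hl, eProd_append, eProd_cons, mul_assoc, mul_assoc, eProd_mul_e_not_mem h2,
      mul_smul_comm, mul_smul_comm, ← mul_assoc (e 𝔽 p q r a) (e 𝔽 p q r a) (eProd 𝔽 p q r l₂),
      e_sq', smul_mul_assoc, one_mul, mul_smul_comm, smul_smul]
  rw [L, R, smul_smul, ← neg_smul]
  congr 1
  have hpow : (-1:𝔽) ^ (p+q+r) = (-1)^(l₁.length + l₂.length + 1) := by rw [hlen]
  rw [hpow, pow_add, pow_add, pow_succ]
  ring_nf
  rw [pow_mul', neg_one_sq, one_pow, mul_one]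

lemma eTop_mul_comm (hodd : Odd (p+q+r)) (y : G 𝔽 p q r) :
    eTop 𝔽 p q r * y = y * eTop 𝔽 p q r := by
  refine mul_central (fun a => ?_) y
  have h := e_mul_eTop (𝔽 := 𝔽) (p := p) (q := q) (r := r) a
  rw [hodd.neg_one_pow, neg_one_smul, neg_neg] at h
  exact h.symm

lemma eTop_mul_super (heven : Even (p+q+r)) (y : G 𝔽 p q r) :
    eTop 𝔽 p q r * y = involute y * eTop 𝔽 p q r := by
  refine mul_super (fun a => ?_) y
  have h := e_mul_eTop (𝔽 := 𝔽) (p := p) (q := q) (r := r) a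
  rw [heven.neg_one_pow, one_smul] at h
  rw [h, neg_neg]

lemma involute_eTop : involute (eTop 𝔽 p q r) = ((-1:𝔽) ^ (p+q+r)) • eTop 𝔽 p q r := by
  rw [eTop_eq, involute_eProd, List.length_finRange]

lemma eTop_sq : ∃ c : 𝔽, eTop 𝔽 p q r * eTop 𝔽 p q r = c • 1 := by
  rw [eTop_eq]; exact eProd_sq (List.nodup_finRange _)

lemma e_null_mul_eTop {a : Fin (p+q+r)} (ha : p + q ≤ (a:ℕ)) :
    e 𝔽 p q r a * eTop 𝔽 p q r = 0 := by
  rw [eTop_eq]; exact e_null_mul_eProd_mem ha (List.mem_finRange a)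

lemma eTop_mul_e_null {a : Fin (p+q+r)} (ha : p + q ≤ (a:ℕ)) :
    eTop 𝔽 p q r * e 𝔽 p q r a = 0 := by
  have h := e_mul_eTop (𝔽 := 𝔽) (p := p) (q := q) (r := r) a
  rw [e_null_mul_eTop ha] at h
  have h2 := h.symm
  rw [neg_eq_zero] at h2
  rcases smul_eq_zero.mp h2 with h' | h'
  · exact absurd h' (pow_ne_zero _ (neg_ne_zero.mpr one_ne_zero))
  · exact h'

end lemmas3
section lemmas4
open CliffordAlgebra
variable {𝔽 : Type*} [RCLike 𝔽] {p q r : ℕ}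

lemma G_nontrivial : (1 : G 𝔽 p q r) ≠ 0 := by
  letI : Invertible (2:𝔽) := invertibleOfNonzero two_ne_zero
  exact one_ne_zero

lemma smul_one_injective {c d : 𝔽} (h : c • (1 : G 𝔽 p q r) = d • 1) : c = d := by
  by_contra hcd
  have h2 : (c - d) • (1 : G 𝔽 p q r) = 0 := by rw [sub_smul, h, sub_self]
  have h3 : (1 : G 𝔽 p q r) = 0 := by
    calc (1 : G 𝔽 p q r) = (c-d)⁻¹ • ((c-d) • 1) := by
          rw [smul_smul, inv_mul_cancel₀ (sub_ne_zero.mpr hcd), one_smul]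
    _ = 0 := by rw [h2, smul_zero]
  exact G_nontrivial h3

/-- The projection killing the null coordinates. -/
def prL (𝔽 : Type*) [RCLike 𝔽] (p q r : ℕ) :
    (Fin (p+q+r) → 𝔽) →ₗ[𝔽] (Fin (p+q+r) → 𝔽) where
  toFun v := fun i => if (i:ℕ) < p + q then v i else 0
  map_add' x y := by funext i; by_cases h : (i:ℕ) < p+q <;> simp [h]
  map_smul' c x := by funext i; by_cases h : (i:ℕ) < p+q <;> simp [h]

def prQI (𝔽 : Type*) [RCLike 𝔽] (p q r : ℕ) : Q 𝔽 p q r →qᵢ Q 𝔽 p q r where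
  toLinearMap := prL 𝔽 p q r
  map_app' v := by
    rw [Q_apply, Q_apply]
    refine Finset.sum_congr rfl fun i _ => ?_
    by_cases h : (i:ℕ) < p+q
    · simp [prL, h]
    · rw [w_null i (le_of_not_gt h), zero_mul, zero_mul]

/-- The algebra endomorphism of `𝒢` killing the null generators. -/
def pr (𝔽 : Type*) [RCLike 𝔽] (p q r : ℕ) : G 𝔽 p q r →ₐ[𝔽] G 𝔽 p q r :=
  CliffordAlgebra.map (prQI 𝔽 p q r)

lemma pr_ι (v : Fin (p+q+r) → 𝔽) :
    pr 𝔽 p q r (ι (Q 𝔽 p q r) v) = ι (Q 𝔽 p q r) (prL 𝔽 p q r v) :=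
  CliffordAlgebra.map_apply_ι _ _

lemma pr_e_null {a : Fin (p+q+r)} (ha : p + q ≤ (a:ℕ)) : pr 𝔽 p q r (e 𝔽 p q r a) = 0 := by
  rw [e, pr_ι]
  have h : prL 𝔽 p q r (Pi.single a (1:𝔽)) = 0 := by
    funext i
    by_cases h : (i:ℕ) < p+q
    · have : i ≠ a := by intro hh; subst hh; omega
      simp [prL, h, Pi.single_apply, this]
    · simp [prL, h]
  rw [h, map_zero]

lemma pr_e_nonnull {a : Fin (p+q+r)} (ha : (a:ℕ) < p + q) :
    pr 𝔽 p q r (e 𝔽 p q r a) = e 𝔽 p q r a := by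
  rw [e, pr_ι]
  have h : prL 𝔽 p q r (Pi.single a (1:𝔽)) = Pi.single a 1 := by
    funext i
    by_cases h : (i:ℕ) < p+q
    · simp [prL, h]
    · have : i ≠ a := by intro hh; subst hh; omega
      simp [prL, h, Pi.single_apply, this]
  rw [h]

lemma pr_involute (x : G 𝔽 p q r) :
    pr 𝔽 p q r (involute x) = involute (pr 𝔽 p q r x) := by
  induction x using CliffordAlgebra.induction with
  | algebraMap c => rw [AlgHom.commutes, AlgHom.commutes, AlgHom.commutes]
  | ι v => rw [involute_ι, map_neg, pr_ι, involute_ι]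
  | mul x y hx hy =>
    rw [map_mul, map_mul, hx, hy, map_mul (pr 𝔽 p q r) x y]
    exact (map_mul involute _ _).symm
  | add x y hx hy =>
    rw [map_add, map_add, hx, hy, map_add (pr 𝔽 p q r) x y]
    exact (map_add involute _ _).symm

/-- rad is a left ideal. -/
lemma rad_mul_left {x : G 𝔽 p q r} (hx : x ∈ radG 𝔽 p q r) (y : G 𝔽 p q r) :
    y * x ∈ radG 𝔽 p q r := by
  induction hx using Submodule.span_induction with
  | mem z hz =>
    obtain ⟨u, v, a, ha, rfl⟩ := hz
    exact Submodule.subset_span ⟨y * u, v, a, ha, by noncomm_ring⟩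
  | zero => rw [mul_zero]; exact Submodule.zero_mem _
  | add a b _ _ ha hb => rw [mul_add]; exact Submodule.add_mem _ ha hb
  | smul c a _ ha => rw [mul_smul_comm]; exact Submodule.smul_mem _ _ ha

lemma rad_mul_right {x : G 𝔽 p q r} (hx : x ∈ radG 𝔽 p q r) (y : G 𝔽 p q r) :
    x * y ∈ radG 𝔽 p q r := by
  induction hx using Submodule.span_induction with
  | mem z hz =>
    obtain ⟨u, v, a, ha, rfl⟩ := hz
    exact Submodule.subset_span ⟨u, v * y, a, ha, by noncomm_ring⟩
  | zero => rw [zero_mul]; exact Submodule.zero_mem _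
  | add a b _ _ ha hb => rw [add_mul]; exact Submodule.add_mem _ ha hb
  | smul c a _ ha => rw [smul_mul_assoc]; exact Submodule.smul_mem _ _ ha

lemma e_null_mem_rad {a : Fin (p+q+r)} (ha : p + q ≤ (a:ℕ)) :
    e 𝔽 p q r a ∈ radG 𝔽 p q r :=
  Submodule.subset_span ⟨1, 1, a, ha, by rw [one_mul, mul_one]⟩

lemma rad_involute {x : G 𝔽 p q r} (hx : x ∈ radG 𝔽 p q r) :
    involute x ∈ radG 𝔽 p q r := by
  induction hx using Submodule.span_induction with
  | mem z hz =>
    obtain ⟨u, v, a, ha, rfl⟩ := hz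
    rw [map_mul, map_mul, e, involute_ι, ← e]
    have : involute u * -e 𝔽 p q r a * involute v
        = -(involute u * e 𝔽 p q r a * involute v) := by noncomm_ring
    rw [this]
    exact Submodule.neg_mem _ (Submodule.subset_span ⟨involute u, involute v, a, ha, rfl⟩)
  | zero => rw [map_zero]; exact Submodule.zero_mem _
  | add a b _ _ ha hb => rw [map_add]; exact Submodule.add_mem _ ha hb
  | smul c a _ ha => rw [map_smul]; exact Submodule.smul_mem _ _ ha

lemma sub_pr_mem_rad (x : G 𝔽 p q r) : x - pr 𝔽 p q r x ∈ radG 𝔽 p q r := by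
  induction x using CliffordAlgebra.induction with
  | algebraMap c => rw [AlgHom.commutes, sub_self]; exact Submodule.zero_mem _
  | ι v =>
    rw [pr_ι, ← map_sub]
    have hv : ι (Q 𝔽 p q r) (v - prL 𝔽 p q r v) = ∑ a, (v - prL 𝔽 p q r v) a • e 𝔽 p q r a :=
      ι_eq_sum _
    rw [hv]
    refine Submodule.sum_mem _ fun a _ => ?_
    by_cases h : (a:ℕ) < p+q
    · have : (v - prL 𝔽 p q r v) a = 0 := by simp [prL, h]
      rw [this, zero_smul]; exact Submodule.zero_mem _
    · exact Submodule.smul_mem _ _ (e_null_mem_rad (le_of_not_gt h))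
  | mul x y hx hy =>
    have hkey : x * y - pr 𝔽 p q r (x * y)
        = (x - pr 𝔽 p q r x) * y + pr 𝔽 p q r x * (y - pr 𝔽 p q r y) := by
      rw [map_mul]; noncomm_ring
    rw [hkey]
    exact Submodule.add_mem _ (rad_mul_right hx y) (rad_mul_left hy _)
  | add x y hx hy =>
    have hkey : x + y - pr 𝔽 p q r (x + y)
        = (x - pr 𝔽 p q r x) + (y - pr 𝔽 p q r y) := by rw [map_add]; abel
    rw [hkey]
    exact Submodule.add_mem _ hx hy

lemma pr_rad_zero {x : G 𝔽 p q r} (hx : x ∈ radG 𝔽 p q r) : pr 𝔽 p q r x = 0 := by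
  induction hx using Submodule.span_induction with
  | mem z hz =>
    obtain ⟨u, v, a, ha, rfl⟩ := hz
    rw [map_mul, map_mul, pr_e_null ha, mul_zero, zero_mul]
  | zero => exact map_zero _
  | add a b _ _ ha hb => rw [map_add, ha, hb, add_zero]
  | smul c a _ ha => rw [map_smul, ha, smul_zero]

lemma mem_rad_iff_pr {x : G 𝔽 p q r} : x ∈ radG 𝔽 p q r ↔ pr 𝔽 p q r x = 0 := by
  constructor
  · exact pr_rad_zero
  · intro h
    have := sub_pr_mem_rad (𝔽 := 𝔽) (p := p) (q := q) (r := r) x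
    rwa [h, sub_zero] at this

end lemmas4
section lemmas5
open CliffordAlgebra
variable {𝔽 : Type*} [RCLike 𝔽] {p q r : ℕ}

/-- Coordinate functional. -/
def dC (𝔽 : Type*) [RCLike 𝔽] (p q r : ℕ) (a : Fin (p+q+r)) :
    Module.Dual 𝔽 (Fin (p+q+r) → 𝔽) := LinearMap.proj a

lemma dC_single (a b : Fin (p+q+r)) :
    dC 𝔽 p q r a (Pi.single b (1:𝔽)) = if b = a then 1 else 0 := by
  simp [dC, Pi.single_apply, eq_comm]

lemma contract_e (d : Module.Dual 𝔽 (Fin (p+q+r) → 𝔽)) (b : Fin (p+q+r)) :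
    contractLeft d (e 𝔽 p q r b) = algebraMap 𝔽 _ (d (Pi.single b 1)) := by
  rw [e, contractLeft_ι]

/-- `contractLeft` is a twisted derivation. -/
lemma contract_mul (d : Module.Dual 𝔽 (Fin (p+q+r) → 𝔽)) (x y : G 𝔽 p q r) :
    contractLeft d (x * y)
      = contractLeft d x * y + involute x * contractLeft d y := by
  induction x using CliffordAlgebra.induction generalizing y with
  | algebraMap c =>
    rw [contractLeft_algebraMap_mul, contractLeft_algebraMap, zero_mul, zero_add,
      AlgHom.commutes]
  | ι v =>
    rw [contractLeft_ι_mul, contractLeft_ι, involute_ι, Algebra.smul_def, neg_mul,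
      sub_eq_add_neg]
  | mul a b ha hb =>
    simp only [mul_assoc, ha, hb, map_mul]
    noncomm_ring
  | add a b ha hb =>
    simp only [add_mul, map_add, ha, hb]
    abel

lemma contract_eProd_not_mem {a : Fin (p+q+r)} {l : List (Fin (p+q+r))} (h : a ∉ l) :
    contractLeft (dC 𝔽 p q r a) (eProd 𝔽 p q r l) = 0 := by
  induction l with
  | nil => rw [eProd_nil, contractLeft_one]
  | cons b l ih =>
    have hb : b ≠ a := fun hh => h (hh ▸ (List.mem_cons_self : b ∈ b :: l))
    rw [eProd_cons, contract_mul, ih (fun hh => h (List.mem_cons_of_mem b hh)), mul_zero,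
      add_zero, contract_e, dC_single, if_neg hb, map_zero, zero_mul]

lemma contract_null_pr {a : Fin (p+q+r)} (ha : p + q ≤ (a:ℕ)) (y : G 𝔽 p q r) :
    contractLeft (dC 𝔽 p q r a) (pr 𝔽 p q r y) = 0 := by
  induction y using CliffordAlgebra.induction with
  | algebraMap c => rw [AlgHom.commutes, contractLeft_algebraMap]
  | ι v =>
    rw [pr_ι, contractLeft_ι]
    have h : dC 𝔽 p q r a (prL 𝔽 p q r v) = 0 := by
      simp [dC, prL]
      intro h; omega
    rw [h, map_zero]
  | mul x y hx hy => rw [map_mul, contract_mul, hx, hy, zero_mul, mul_zero, add_zero]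
  | add x y hx hy => rw [map_add, map_add, hx, hy, add_zero]

lemma eProd_mul_pr_eq_zero {l : List (Fin (p+q+r))} (hl : l.Nodup) {y : G 𝔽 p q r}
    (h : eProd 𝔽 p q r l * pr 𝔽 p q r y = 0) : pr 𝔽 p q r y = 0 := by
  induction l with
  | nil => rwa [eProd_nil, one_mul] at h
  | cons a l ih =>
    have hal : a ∉ l := (List.nodup_cons.mp hl).1
    have hnd : l.Nodup := (List.nodup_cons.mp hl).2
    refine ih hnd ?_
    by_cases ha : p + q ≤ (a:ℕ)
    · -- contract by dC a
      have h2 := congrArg (contractLeft (dC 𝔽 p q r a)) h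
      rw [map_zero, eProd_cons, mul_assoc, contract_mul, contract_e, dC_single,
        if_pos rfl, map_one, one_mul, contract_mul, contract_eProd_not_mem hal,
        contract_null_pr ha, zero_mul, mul_zero, add_zero, mul_zero, add_zero] at h2
      exact h2
    · -- e a is invertible
      have hu := e_isUnit (𝔽 := 𝔽) (a := a) (q := q) (lt_of_not_ge ha)
      rw [eProd_cons, mul_assoc] at h
      obtain ⟨u, hu'⟩ := hu
      have : (↑u⁻¹ : G 𝔽 p q r) * (↑u * (eProd 𝔽 p q r l * pr 𝔽 p q r y)) = 0 := by
        rw [hu', h, mul_zero]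
      rwa [← mul_assoc, Units.inv_mul, one_mul] at this
  
lemma eProd_ne_zero {l : List (Fin (p+q+r))} (hl : l.Nodup) : eProd 𝔽 p q r l ≠ 0 := by
  intro h
  have h1 : eProd 𝔽 p q r l * pr 𝔽 p q r 1 = 0 := by rw [h, zero_mul]
  have := eProd_mul_pr_eq_zero hl h1
  rw [map_one] at this
  exact G_nontrivial this

/-- Linear independence of `1` and a nonempty product of distinct generators. -/
lemma one_eProd_indep {l : List (Fin (p+q+r))} (hl : l.Nodup) (hne : l ≠ [])
    {α β : 𝔽} (h : α • 1 + β • eProd 𝔽 p q r l = 0) : α = 0 ∧ β = 0 := by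
  obtain ⟨a, l', rfl⟩ := List.exists_cons_of_ne_nil hne
  have hal : a ∉ l' := (List.nodup_cons.mp hl).1
  have hβ : β = 0 := by
    have h2 := congrArg (contractLeft (dC 𝔽 p q r a)) h
    rw [map_zero, map_add, map_smul, map_smul, contractLeft_one, eProd_cons, contract_mul,
      contract_eProd_not_mem hal, mul_zero, add_zero, contract_e, dC_single,
      if_pos rfl, map_one, one_mul, smul_zero, zero_add] at h2
    rcases smul_eq_zero.mp h2 with h' | h'
    · exact h'
    · exact absurd h' (eProd_ne_zero (List.nodup_cons.mp hl).2)
  refine ⟨?_, hβ⟩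
  rw [hβ, zero_smul, add_zero] at h
  rcases smul_eq_zero.mp h with h' | h'
  · exact h'
  · exact absurd h' G_nontrivial

lemma one_eTop_indep (hn : 1 ≤ p + q + r) {α β : 𝔽}
    (h : α • 1 + β • eTop 𝔽 p q r = 0) : α = 0 ∧ β = 0 := by
  rw [eTop_eq] at h
  refine one_eProd_indep (List.nodup_finRange _) ?_ h
  intro hc
  have := congrArg List.length hc
  rw [List.length_finRange] at this
  simp at this
  omega

lemma eTop_ne_zero : eTop 𝔽 p q r ≠ 0 := by
  rw [eTop_eq]; exact eProd_ne_zero (List.nodup_finRange _)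

end lemmas5
section lemmas6
open CliffordAlgebra
variable {𝔽 : Type*} [RCLike 𝔽] {p q r : ℕ}

def Jk (𝔽 : Type*) [RCLike 𝔽] (p q r k : ℕ) : Submodule 𝔽 (G 𝔽 p q r) :=
  Submodule.span 𝔽 {x | ∃ (u : G 𝔽 p q r) (l : List (Fin (p+q+r))),
    l.length = k ∧ (∀ a ∈ l, p + q ≤ (a:ℕ)) ∧ x = u * eProd 𝔽 p q r l}

lemma rad_le_J1 : radG 𝔽 p q r ≤ Jk 𝔽 p q r 1 := by
  rw [radG, Submodule.span_le]
  rintro x ⟨u, v, a, ha, rfl⟩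
  refine Submodule.subset_span ⟨u * involute v, [a], rfl, by simpa using ha, ?_⟩
  rw [mul_assoc, e_null_mul ha v]
  simp [mul_assoc]

lemma eProd_null_swap {l : List (Fin (p+q+r))} (hl : ∀ a ∈ l, p + q ≤ (a:ℕ))
    (z : G 𝔽 p q r) : ∃ z', eProd 𝔽 p q r l * z = z' * eProd 𝔽 p q r l := by
  induction l generalizing z with
  | nil => exact ⟨z, by simp⟩
  | cons b l ih =>
    obtain ⟨z', hz'⟩ := ih (fun a ha => hl a (List.mem_cons_of_mem b ha)) z
    refine ⟨involute z', ?_⟩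
    rw [eProd_cons, mul_assoc, hz', ← mul_assoc, e_null_mul (hl b ((List.mem_cons_self : b ∈ b :: l))) z',
      mul_assoc]

lemma Jk_mul_rad' {k : ℕ} {x : G 𝔽 p q r} (hx : x ∈ Jk 𝔽 p q r k) :
    ∀ y ∈ radG 𝔽 p q r, x * y ∈ Jk 𝔽 p q r (k+1) := by
  induction hx using Submodule.span_induction with
  | mem x hxg =>
    intro y hy
    induction hy using Submodule.span_induction with
    | mem y hyg =>
      obtain ⟨u, l, hlen, hnull, rfl⟩ := hxg
      obtain ⟨u', v', a, ha, rfl⟩ := hyg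
      obtain ⟨z', hz⟩ := eProd_null_swap hnull (u' * involute v')
      have key : eProd 𝔽 p q r l * (u' * (involute v' * e 𝔽 p q r a))
          = z' * (eProd 𝔽 p q r l * e 𝔽 p q r a) := by
        rw [← mul_assoc u', ← mul_assoc, hz, mul_assoc]
      refine Submodule.subset_span ⟨u * z', l ++ [a], by simp [hlen],
        fun b hb => ?_, ?_⟩
      · rcases List.mem_append.mp hb with h | h
        · exact hnull b h
        · simpa using (List.mem_singleton.mp h) ▸ ha
      · rw [eProd_append]
        simp only [eProd_cons, eProd_nil, mul_one]
        calc u * eProd 𝔽 p q r l * (u' * e 𝔽 p q r a * v')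
            = u * (eProd 𝔽 p q r l * (u' * (e 𝔽 p q r a * v'))) := by
              simp only [mul_assoc]
          _ = u * (eProd 𝔽 p q r l * (u' * (involute v' * e 𝔽 p q r a))) := by
              rw [e_null_mul ha v']
          _ = u * (z' * (eProd 𝔽 p q r l * e 𝔽 p q r a)) := by rw [key]
          _ = u * z' * (eProd 𝔽 p q r l * e 𝔽 p q r a) := by rw [mul_assoc]
    | zero => rw [mul_zero]; exact Submodule.zero_mem _
    | add a b _ _ ha hb => rw [mul_add]; exact Submodule.add_mem _ ha hb
    | smul c a _ ha => rw [mul_smul_comm]; exact Submodule.smul_mem _ _ ha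
  | zero => intro y hy; rw [zero_mul]; exact Submodule.zero_mem _
  | add a b _ _ ha hb =>
    intro y hy
    rw [add_mul]; exact Submodule.add_mem _ (ha y hy) (hb y hy)
  | smul c a _ ha =>
    intro y hy
    rw [smul_mul_assoc]; exact Submodule.smul_mem _ _ (ha y hy)

lemma Jk_mul_rad {k : ℕ} {x y : G 𝔽 p q r} (hx : x ∈ Jk 𝔽 p q r k)
    (hy : y ∈ radG 𝔽 p q r) : x * y ∈ Jk 𝔽 p q r (k+1) := Jk_mul_rad' hx y hy

lemma eProd_null_not_nodup {l : List (Fin (p+q+r))} (hl : ∀ a ∈ l, p + q ≤ (a:ℕ))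
    (h : ¬ l.Nodup) : eProd 𝔽 p q r l = 0 := by
  induction l with
  | nil => exact absurd List.nodup_nil h
  | cons b l ih =>
    by_cases hb : b ∈ l
    · rw [eProd_cons, e_null_mul_eProd_mem (hl b ((List.mem_cons_self : b ∈ b :: l))) hb]
    · have : ¬ l.Nodup := fun hnd => h (List.nodup_cons.mpr ⟨hb, hnd⟩)
      rw [eProd_cons, ih (fun a ha => hl a (List.mem_cons_of_mem b ha)) this, mul_zero]

lemma Jk_top_eq_bot {x : G 𝔽 p q r} (hx : x ∈ Jk 𝔽 p q r (r+1)) : x = 0 := by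
  induction hx using Submodule.span_induction with
  | mem x hxg =>
    obtain ⟨u, l, hlen, hnull, rfl⟩ := hxg
    have hnd : ¬ l.Nodup := by
      intro hnd
      have h1 : l.toFinset.card = r + 1 := by
        rw [List.toFinset_card_of_nodup hnd, hlen]
      have h2 : l.toFinset.card ≤ r := by
        have hinj : ∀ a ∈ l.toFinset, ∀ b ∈ l.toFinset,
            ((a:ℕ) - (p+q) : ℕ) = ((b:ℕ) - (p+q)) → a = b := by
          intro a ha b hb hab
          have ha' := hnull a (List.mem_toFinset.mp ha)
          have hb' := hnull b (List.mem_toFinset.mp hb)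
          exact Fin.ext (by omega)
        have := Finset.card_le_card_of_injOn
          (f := fun a : Fin (p+q+r) => ((a:ℕ) - (p+q) : ℕ))
          (t := Finset.range r) ?_ hinj
        · simpa using this
        · intro a ha
          have ha' := hnull a (List.mem_toFinset.mp ha)
          have := a.isLt
          simp only [Finset.mem_coe, Finset.coe_range, Set.mem_Iio, Finset.mem_range]
          omega
      omega
    rw [eProd_null_not_nodup hnull hnd, mul_zero]
  | zero => rfl
  | add a b _ _ ha hb => rw [ha, hb, add_zero]
  | smul c a _ ha => rw [ha, smul_zero]

lemma rad_pow_zero {x : G 𝔽 p q r} (hx : x ∈ radG 𝔽 p q r) : x ^ (r+1) = 0 := by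
  have hstep : ∀ k, x ^ (k+1) ∈ Jk 𝔽 p q r (k+1) := by
    intro k
    induction k with
    | zero => rw [pow_one]; exact rad_le_J1 hx
    | succ m ih => rw [pow_succ]; exact Jk_mul_rad ih hx
  exact Jk_top_eq_bot (hstep r)

lemma one_add_rad_isUnit {x : G 𝔽 p q r} (hx : x ∈ radG 𝔽 p q r) : IsUnit (1 + x) :=
  IsNilpotent.isUnit_one_add ⟨r+1, rad_pow_zero hx⟩

lemma ring_inverse_eq {a x : G 𝔽 p q r} (h : IsUnit a) (h1 : x * a = 1) :
    Ring.inverse a = x := by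
  rw [← one_mul (Ring.inverse a), ← h1, mul_assoc, Ring.mul_inverse_cancel _ h, mul_one]

lemma isUnit_of_pr_isUnit {x : G 𝔽 p q r} (h : IsUnit (pr 𝔽 p q r x)) : IsUnit x := by
  have hρ : Ring.inverse (pr 𝔽 p q r x) * (x - pr 𝔽 p q r x) ∈ radG 𝔽 p q r :=
    rad_mul_left (sub_pr_mem_rad x) _
  have h2 : x = pr 𝔽 p q r x * (1 + Ring.inverse (pr 𝔽 p q r x) * (x - pr 𝔽 p q r x)) := by
    rw [mul_add, mul_one, ← mul_assoc, Ring.mul_inverse_cancel _ h, one_mul]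
    abel
  rw [h2]
  exact h.mul (one_add_rad_isUnit hρ)

lemma rad_mul_eTop {x : G 𝔽 p q r} (hx : x ∈ radG 𝔽 p q r) : x * eTop 𝔽 p q r = 0 := by
  induction hx using Submodule.span_induction with
  | mem x hxg =>
    obtain ⟨u, v, a, ha, rfl⟩ := hxg
    rw [mul_assoc u, e_null_mul ha v, mul_assoc, mul_assoc (involute v),
      e_null_mul_eTop ha, mul_zero, mul_zero]
  | zero => rw [zero_mul]
  | add a b _ _ ha hb => rw [add_mul, ha, hb, add_zero]
  | smul c a _ ha => rw [smul_mul_assoc, ha, smul_zero]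

lemma eTop_mul_rad {x : G 𝔽 p q r} (hx : x ∈ radG 𝔽 p q r) : eTop 𝔽 p q r * x = 0 := by
  induction hx using Submodule.span_induction with
  | mem x hxg =>
    obtain ⟨u, v, a, ha, rfl⟩ := hxg
    have h1 : u * e 𝔽 p q r a = e 𝔽 p q r a * involute u := by
      have := e_null_mul ha (involute u)
      rw [involute_involute] at this
      exact this.symm
    rw [h1, ← mul_assoc, ← mul_assoc, eTop_mul_e_null ha, zero_mul, zero_mul]
  | zero => rw [mul_zero]
  | add a b _ _ ha hb => rw [mul_add, ha, hb, add_zero]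
  | smul c a _ ha => rw [mul_smul_comm, ha, smul_zero]

lemma mem_rad_of_eTop_mul {y : G 𝔽 p q r} (h : eTop 𝔽 p q r * y = 0) :
    y ∈ radG 𝔽 p q r := by
  have h1 : eTop 𝔽 p q r * pr 𝔽 p q r y = 0 := by
    have h2 : eTop 𝔽 p q r * (pr 𝔽 p q r y - y) = 0 := by
      have : pr 𝔽 p q r y - y ∈ radG 𝔽 p q r := by
        have := Submodule.neg_mem _ (sub_pr_mem_rad (𝔽 := 𝔽) (p := p) (q := q) (r := r) y)
        rwa [neg_sub] at this
      exact eTop_mul_rad this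
    have h3 : eTop 𝔽 p q r * pr 𝔽 p q r y
        = eTop 𝔽 p q r * (pr 𝔽 p q r y - y) + eTop 𝔽 p q r * y := by
      rw [← mul_add]; congr 1; abel
    rw [h3, h2, h, add_zero]
  rw [mem_rad_iff_pr]
  refine eProd_mul_pr_eq_zero (List.nodup_finRange _) ?_
  rw [← eTop_eq, h1]

lemma mem_W_iff {x : G 𝔽 p q r} :
    x ∈ G0 𝔽 p q r ⊔ Gn 𝔽 p q r ↔ ∃ α β : 𝔽, x = α • 1 + β • eTop 𝔽 p q r := by
  rw [Submodule.mem_sup]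
  constructor
  · rintro ⟨y, hy, z, hz, rfl⟩
    obtain ⟨α, rfl⟩ := Submodule.mem_span_singleton.mp hy
    obtain ⟨β, rfl⟩ := Submodule.mem_span_singleton.mp hz
    exact ⟨α, β, rfl⟩
  · rintro ⟨α, β, rfl⟩
    exact ⟨α • 1, Submodule.smul_mem _ _ (Submodule.mem_span_singleton_self _),
      β • eTop 𝔽 p q r, Submodule.smul_mem _ _ (Submodule.mem_span_singleton_self _), rfl⟩

lemma one_mem_W : (1 : G 𝔽 p q r) ∈ G0 𝔽 p q r ⊔ Gn 𝔽 p q r := by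
  rw [mem_W_iff]; exact ⟨1, 0, by simp⟩

lemma eTop_mem_W : eTop 𝔽 p q r ∈ G0 𝔽 p q r ⊔ Gn 𝔽 p q r := by
  rw [mem_W_iff]; exact ⟨0, 1, by simp⟩

end lemmas6
section lemmas7
open CliffordAlgebra
variable {𝔽 : Type*} [RCLike 𝔽] {p q r : ℕ}

lemma isUnit_involute {T : G 𝔽 p q r} (h : IsUnit T) : IsUnit (involute T) :=
  h.map (involute : G 𝔽 p q r →ₐ[𝔽] G 𝔽 p q r)

lemma ring_inverse_mul {E S : G 𝔽 p q r} (hE : IsUnit E) (hS : IsUnit S) :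
    Ring.inverse (E * S) = Ring.inverse S * Ring.inverse E := by
  refine ring_inverse_eq (hE.mul hS) ?_
  rw [mul_assoc, ← mul_assoc (Ring.inverse E), Ring.inverse_mul_cancel _ hE, one_mul,
    Ring.inverse_mul_cancel _ hS]

lemma involute_ring_inverse {T : G 𝔽 p q r} (hT : IsUnit T) :
    involute (Ring.inverse T) = Ring.inverse (involute T) := by
  refine (ring_inverse_eq (isUnit_involute hT) ?_).symm
  rw [← map_mul, Ring.inverse_mul_cancel _ hT, map_one]

lemma isUnit_smul_one {c : 𝔽} (hc : c ≠ 0) : IsUnit (c • (1 : G 𝔽 p q r)) := by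
  refine ⟨⟨c • 1, c⁻¹ • 1, ?_, ?_⟩, rfl⟩ <;>
    rw [smul_mul_assoc, mul_smul_comm, one_mul, smul_smul] <;>
    first
      | rw [mul_inv_cancel₀ hc, one_smul]
      | rw [inv_mul_cancel₀ hc, one_smul]

lemma smul_one_eq_one {c : 𝔽} (h : c • (1 : G 𝔽 p q r) = 1) : c = 1 :=
  smul_one_injective (𝔽 := 𝔽) (p := p) (q := q) (r := r) (c := c) (d := 1)
    (by rw [h, one_smul])

lemma W_expand {lam α β γ δ : 𝔽} (hsq : eTop 𝔽 p q r * eTop 𝔽 p q r = lam • 1) :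
    (α • 1 + β • eTop 𝔽 p q r) * (γ • 1 + δ • eTop 𝔽 p q r)
      = (α*γ + β*δ*lam) • (1 : G 𝔽 p q r) + (α*δ + β*γ) • eTop 𝔽 p q r := by
  simp only [add_mul, mul_add, smul_mul_assoc, mul_smul_comm, one_mul, mul_one, hsq,
    smul_smul]
  module

lemma W_central (hodd : Odd (p+q+r)) {x : G 𝔽 p q r}
    (hx : x ∈ G0 𝔽 p q r ⊔ Gn 𝔽 p q r) (y : G 𝔽 p q r) : x * y = y * x := by
  obtain ⟨α, β, rfl⟩ := mem_W_iff.mp hx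
  rw [add_mul, mul_add, smul_mul_assoc, smul_mul_assoc, mul_smul_comm, mul_smul_comm,
    one_mul, mul_one, eTop_mul_comm hodd]

lemma involute_W_odd (hodd : Odd (p+q+r)) {α β : 𝔽} :
    involute (α • 1 + β • eTop 𝔽 p q r) = α • (1 : G 𝔽 p q r) + (-β) • eTop 𝔽 p q r := by
  rw [map_add, map_smul, map_smul, map_one, involute_eTop, hodd.neg_one_pow, smul_smul]
  ring_nf

lemma involute_W_even (heven : Even (p+q+r)) {α β : 𝔽} :
    involute (α • 1 + β • eTop 𝔽 p q r) = α • (1 : G 𝔽 p q r) + β • eTop 𝔽 p q r := by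
  rw [map_add, map_smul, map_smul, map_one, involute_eTop, heven.neg_one_pow, one_smul]

lemma mem_Epm_iff {T : G 𝔽 p q r} :
    T ∈ Epm 𝔽 p q r ↔ IsUnit T ∧ (involute T = T ∨ involute T = -T) := by
  constructor
  · rintro (⟨h1, h2⟩ | ⟨h1, h2⟩)
    · exact ⟨h2, Or.inl h1⟩
    · exact ⟨h2, Or.inr h1⟩
  · rintro ⟨h1, h2 | h2⟩
    · exact Or.inl ⟨h2, h1⟩
    · exact Or.inr ⟨h2, h1⟩

lemma mem_ux_iff {S : Set (G 𝔽 p q r)} {x : G 𝔽 p q r} :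
    x ∈ ux 𝔽 p q r S ↔ x ∈ S ∧ IsUnit x := Iff.rfl

/-- Elements of `𝒢⁰ + rad 𝒢` commute with `eTop`. -/
lemma G0rad_comm_eTop {x : G 𝔽 p q r} (hx : x ∈ G0 𝔽 p q r ⊔ radG 𝔽 p q r) :
    x * eTop 𝔽 p q r = eTop 𝔽 p q r * x := by
  rw [Submodule.mem_sup] at hx
  obtain ⟨y, hy, z, hz, rfl⟩ := hx
  obtain ⟨σ, rfl⟩ := Submodule.mem_span_singleton.mp hy
  rw [add_mul, mul_add, rad_mul_eTop hz, eTop_mul_rad hz, smul_mul_assoc, mul_smul_comm,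
    one_mul, mul_one]

lemma one_mem_G0rad : (1 : G 𝔽 p q r) ∈ G0 𝔽 p q r ⊔ radG 𝔽 p q r :=
  Submodule.mem_sup_left (Submodule.mem_span_singleton_self _)

/-- Even units commute with `eTop` when `n` is even. -/
lemma even_comm_eTop (heven : Even (p+q+r)) {T : G 𝔽 p q r} (hT : involute T = T) :
    T * eTop 𝔽 p q r = eTop 𝔽 p q r * T := by
  have := eTop_mul_super heven T
  rw [hT] at this
  exact this.symm

lemma odd_anticomm_eTop (heven : Even (p+q+r)) {T : G 𝔽 p q r} (hT : involute T = -T) :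
    T * eTop 𝔽 p q r = -(eTop 𝔽 p q r * T) := by
  have := eTop_mul_super heven T
  rw [hT, neg_mul] at this
  rw [this, neg_neg]

end lemmas7
section mainparts
open CliffordAlgebra
variable {𝔽 : Type*} [RCLike 𝔽] {p q r : ℕ}

lemma W_coeff (hn : 1 ≤ p+q+r) {a b c d : 𝔽}
    (h : a • (1 : G 𝔽 p q r) + b • eTop 𝔽 p q r = c • 1 + d • eTop 𝔽 p q r) :
    a = c ∧ b = d := by
  have h0 : (a - c) • (1 : G 𝔽 p q r) + (b - d) • eTop 𝔽 p q r = 0 := by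
    rw [sub_smul, sub_smul]
    rw [← sub_eq_zero] at h
    calc a • (1 : G 𝔽 p q r) - c • 1 + (b • eTop 𝔽 p q r - d • eTop 𝔽 p q r)
        = a • 1 + b • eTop 𝔽 p q r - (c • 1 + d • eTop 𝔽 p q r) := by abel
      _ = 0 := h
  obtain ⟨h1, h2⟩ := one_eTop_indep hn h0
  exact ⟨sub_eq_zero.mp h1, sub_eq_zero.mp h2⟩

lemma conj_expand (T S x y : G 𝔽 p q r) (c d : 𝔽) :
    T * (c • x + d • y) * S = c • (T * x * S) + d • (T * y * S) := by
  simp only [mul_add, add_mul, mul_smul_comm, smul_mul_assoc]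

lemma conj_one {T : G 𝔽 p q r} (hT : IsUnit T) : T * 1 * Ring.inverse T = 1 := by
  rw [mul_one, Ring.mul_inverse_cancel _ hT]

lemma conj_of_comm {T x : G 𝔽 p q r} (hT : IsUnit T) (hc : T * x = x * T) :
    T * x * Ring.inverse T = x := by
  rw [hc, mul_assoc, Ring.mul_inverse_cancel _ hT, mul_one]

lemma conj_of_anticomm {T x : G 𝔽 p q r} (hT : IsUnit T) (hc : T * x = -(x * T)) :
    T * x * Ring.inverse T = -x := by
  rw [hc, neg_mul, mul_assoc, Ring.mul_inverse_cancel _ hT, mul_one]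

/-- Part 1 : n odd, `Γ^{0n}` is the whole unit group. -/
lemma part1 (hodd : Odd (p+q+r)) :
    gammaAd 𝔽 p q r (G0 𝔽 p q r ⊔ Gn 𝔽 p q r) = {x : G 𝔽 p q r | IsUnit x} := by
  ext T
  constructor
  · exact fun h => h.1
  · intro hT
    refine ⟨hT, fun U hU => ?_⟩
    rw [← W_central hodd hU T, mul_assoc, Ring.mul_inverse_cancel _ hT, mul_one]
    exact hU

/-- Part 4 : n even, `Γ̌^{0n} = 𝒢^{(0)×} ∪ 𝒢^{(1)×}`. -/
lemma part4 (hn : 1 ≤ p+q+r) (heven : Even (p+q+r)) :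
    gammaTw 𝔽 p q r (G0 𝔽 p q r ⊔ Gn 𝔽 p q r) = Epm 𝔽 p q r := by
  obtain ⟨lam, hsq⟩ := eTop_sq (𝔽 := 𝔽) (p := p) (q := q) (r := r)
  ext T
  constructor
  · rintro ⟨hT, hc⟩
    have h1 := hc 1 one_mem_W
    rw [mul_one] at h1
    obtain ⟨α, β, hw⟩ := mem_W_iff.mp h1
    have hiT : involute T = (α • 1 + β • eTop 𝔽 p q r) * T := by
      have h2 : involute T * Ring.inverse T * T = involute T := by
        rw [mul_assoc, Ring.inverse_mul_cancel _ hT, mul_one]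
      rw [← h2, hw]
    have h2 : T = ((α • 1 + β • eTop 𝔽 p q r) * (α • 1 + β • eTop 𝔽 p q r)) * T := by
      calc T = involute (involute T) := (involute_involute T).symm
        _ = involute ((α • 1 + β • eTop 𝔽 p q r) * T) := by rw [← hiT]
        _ = (α • 1 + β • eTop 𝔽 p q r) * involute T := by
            rw [map_mul, involute_W_even heven]
        _ = ((α • 1 + β • eTop 𝔽 p q r) * (α • 1 + β • eTop 𝔽 p q r)) * T := by
            rw [hiT, mul_assoc]
    have h3 : (α • 1 + β • eTop 𝔽 p q r) * (α • 1 + β • eTop 𝔽 p q r) = 1 := by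
      have h4 := congrArg (fun z => z * Ring.inverse T) h2
      simp only [mul_assoc, Ring.mul_inverse_cancel _ hT, mul_one] at h4
      exact h4.symm
    rw [W_expand hsq] at h3
    have h5 : (α*α + β*β*lam) • (1 : G 𝔽 p q r) + (α*β + β*α) • eTop 𝔽 p q r
        = (1:𝔽) • 1 + (0:𝔽) • eTop 𝔽 p q r := by
      rw [h3, one_smul, zero_smul, add_zero]
    obtain ⟨hA, hB⟩ := W_coeff hn h5
    have hαβ : α * β = 0 := by
      have h2ne : (2:𝔽) ≠ 0 := two_ne_zero
      have : (2:𝔽) * (α * β) = 0 := by ring_nf; linear_combination hB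
      rcases mul_eq_zero.mp this with h' | h'
      · exact absurd h' h2ne
      · exact h'
    rcases mul_eq_zero.mp hαβ with hα | hβ
    · -- α = 0 : contradiction
      exfalso
      have hiT2 : involute T = β • (eTop 𝔽 p q r * T) := by
        rw [hiT, hα, zero_smul, zero_add, smul_mul_assoc]
      have hTI : T * eTop 𝔽 p q r = (β * lam) • T := by
        have h6 : eTop 𝔽 p q r * involute T = T * eTop 𝔽 p q r := by
          have := eTop_mul_super heven (involute T)
          rwa [involute_involute] at this
        rw [← h6, hiT2, mul_smul_comm, ← mul_assoc, hsq, smul_mul_assoc, one_mul, smul_smul]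
      have h7 : eTop 𝔽 p q r = (β * lam) • (1 : G 𝔽 p q r) := by
        have h8 := congrArg (fun z => Ring.inverse T * z) hTI
        simp only [← mul_assoc, Ring.inverse_mul_cancel _ hT, one_mul, mul_smul_comm,
          mul_one] at h8
        exact h8
      have h9 : (β*lam) • (1 : G 𝔽 p q r) + (-1 : 𝔽) • eTop 𝔽 p q r
          = (0:𝔽) • 1 + (0:𝔽) • eTop 𝔽 p q r := by
        rw [← h7, neg_smul, one_smul, add_neg_cancel, zero_smul, zero_smul, add_zero]
      obtain ⟨-, hcontra⟩ := W_coeff hn h9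
      exact one_ne_zero (neg_eq_zero.mp hcontra)
    · -- β = 0 : T is even or odd
      rw [hβ, zero_smul, add_zero] at hiT
      rw [hβ] at hA
      have hα1 : α = 1 ∨ α = -1 := by
        have : (α - 1) * (α + 1) = 0 := by linear_combination hA
        rcases mul_eq_zero.mp this with h' | h'
        · exact Or.inl (by linear_combination h')
        · exact Or.inr (by linear_combination h')
      rw [mem_Epm_iff]
      refine ⟨hT, ?_⟩
      rcases hα1 with h' | h'
      · left; rw [hiT, h', one_smul, one_mul]
      · right; rw [hiT, h', neg_smul, one_smul, neg_one_mul]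
  · intro hTE
    obtain ⟨hT, hpar⟩ := mem_Epm_iff.mp hTE
    refine ⟨hT, fun U hU => ?_⟩
    obtain ⟨α, β, rfl⟩ := mem_W_iff.mp hU
    rcases hpar with hTe | hTo
    · rw [hTe, conj_expand, conj_one hT,
        conj_of_comm hT (even_comm_eTop heven hTe)]
      exact mem_W_iff.mpr ⟨α, β, rfl⟩
    · rw [hTo, neg_mul, neg_mul, conj_expand, conj_one hT,
        conj_of_anticomm hT (odd_anticomm_eTop heven hTo)]
      have hrw : -(α • (1 : G 𝔽 p q r) + β • (-(eTop 𝔽 p q r)))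
          = (-α) • 1 + β • eTop 𝔽 p q r := by module
      rw [hrw]
      exact mem_W_iff.mpr ⟨-α, β, rfl⟩

end mainparts
section helpers9
open CliffordAlgebra
variable {𝔽 : Type*} [RCLike 𝔽] {p q r : ℕ}

lemma isUnit_ring_inverse {a : G 𝔽 p q r} (h : IsUnit a) : IsUnit (Ring.inverse a) :=
  ⟨⟨Ring.inverse a, a, Ring.inverse_mul_cancel _ h, Ring.mul_inverse_cancel _ h⟩, rfl⟩

lemma central_inv {x : G 𝔽 p q r} (hx : IsUnit x) (hc : ∀ y, x * y = y * x) (y : G 𝔽 p q r) :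
    Ring.inverse x * y = y * Ring.inverse x := by
  have h1 : Ring.inverse x * (y * x) = Ring.inverse x * (x * y) := by rw [← hc y]
  have h2 : Ring.inverse x * (x * y) = y := by
    rw [← mul_assoc, Ring.inverse_mul_cancel _ hx, one_mul]
  have h3 : Ring.inverse x * y * x = y := by rw [mul_assoc, h1, h2]
  calc Ring.inverse x * y = Ring.inverse x * y * (x * Ring.inverse x) := by
        rw [Ring.mul_inverse_cancel _ hx, mul_one]
    _ = y * Ring.inverse x := by rw [← mul_assoc, h3]

lemma W_mul_mem {x y : G 𝔽 p q r} (hx : x ∈ G0 𝔽 p q r ⊔ Gn 𝔽 p q r)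
    (hy : y ∈ G0 𝔽 p q r ⊔ Gn 𝔽 p q r) : x * y ∈ G0 𝔽 p q r ⊔ Gn 𝔽 p q r := by
  obtain ⟨lam, hsq⟩ := eTop_sq (𝔽 := 𝔽) (p := p) (q := q) (r := r)
  obtain ⟨α, β, rfl⟩ := mem_W_iff.mp hx
  obtain ⟨γ, δ, rfl⟩ := mem_W_iff.mp hy
  rw [W_expand hsq]
  exact mem_W_iff.mpr ⟨_, _, rfl⟩

lemma involute_W_mem {x : G 𝔽 p q r} (hx : x ∈ G0 𝔽 p q r ⊔ Gn 𝔽 p q r) :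
    involute x ∈ G0 𝔽 p q r ⊔ Gn 𝔽 p q r := by
  obtain ⟨α, β, rfl⟩ := mem_W_iff.mp hx
  rw [map_add, map_smul, map_smul, map_one, involute_eTop, smul_smul]
  exact mem_W_iff.mpr ⟨_, _, rfl⟩

/-- A unit lying in `W` has its `Ring.inverse` in `W`. -/
lemma W_inverse_mem (hn : 1 ≤ p+q+r) {S : G 𝔽 p q r} (hS : IsUnit S)
    (hSW : S ∈ G0 𝔽 p q r ⊔ Gn 𝔽 p q r) : Ring.inverse S ∈ G0 𝔽 p q r ⊔ Gn 𝔽 p q r := by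
  obtain ⟨lam, hsq⟩ := eTop_sq (𝔽 := 𝔽) (p := p) (q := q) (r := r)
  obtain ⟨α, β, hSw⟩ := mem_W_iff.mp hSW
  set Sh : G 𝔽 p q r := α • 1 + (-β) • eTop 𝔽 p q r with hSh
  have hmul : Sh * S = (α*α - β*β*lam) • 1 := by
    rw [hSw, hSh, W_expand hsq]
    have c1 : α*α + -β*β*lam = α*α - β*β*lam := by ring
    have c2 : α*β + -β*α = 0 := by ring
    rw [c1, c2, zero_smul, add_zero]
  have hmu : α*α - β*β*lam ≠ 0 := by
    intro h0
    have hSh0 : Sh * S = 0 := by rw [hmul, h0, zero_smul]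
    have h1 : Sh = 0 := by
      have h2 : Sh * (S * Ring.inverse S) = 0 := by
        rw [← mul_assoc, hSh0, zero_mul]
      rwa [Ring.mul_inverse_cancel _ hS, mul_one] at h2
    obtain ⟨hα, hβ⟩ := one_eTop_indep hn (by rw [← hSh, h1])
    have h3 : S = 0 := by
      rw [hSw, hα, neg_eq_zero.mp hβ, zero_smul, zero_smul, add_zero]
    rw [h3] at hS
    exact G_nontrivial ((isUnit_zero_iff.mp hS).symm)
  refine mem_W_iff.mpr ⟨(α*α - β*β*lam)⁻¹ * α, (α*α - β*β*lam)⁻¹ * (-β), ?_⟩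
  refine ring_inverse_eq hS ?_
  rw [hSw, W_expand hsq]
  have c1 : (α*α - β*β*lam)⁻¹ * α * α + (α*α - β*β*lam)⁻¹ * (-β) * β * lam = 1 := by
    rw [show (α*α - β*β*lam)⁻¹ * α * α + (α*α - β*β*lam)⁻¹ * (-β) * β * lam = (α*α - β*β*lam)⁻¹ * (α*α - β*β*lam) by ring, inv_mul_cancel₀ hmu]
  have c2 : (α*α - β*β*lam)⁻¹ * α * β + (α*α - β*β*lam)⁻¹ * (-β) * α = 0 := by ring
  rw [c1, c2, zero_smul, add_zero, one_smul]

end helpers9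
section part3sec
open CliffordAlgebra
variable {𝔽 : Type*} [RCLike 𝔽] {p q r : ℕ}

/-- Part 3 : n odd, `Γ̌^{0n} = (𝒢^{(0)×} ∪ 𝒢^{(1)×})(𝒢⁰+𝒢ⁿ)^×`. -/
lemma part3 (hn : 1 ≤ p+q+r) (hodd : Odd (p+q+r)) :
    gammaTw 𝔽 p q r (G0 𝔽 p q r ⊔ Gn 𝔽 p q r)
      = Epm 𝔽 p q r * ux 𝔽 p q r ↑(G0 𝔽 p q r ⊔ Gn 𝔽 p q r) := by
  obtain ⟨lam, hsq⟩ := eTop_sq (𝔽 := 𝔽) (p := p) (q := q) (r := r)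
  ext T
  constructor
  · rintro ⟨hT, hc⟩
    have h1 := hc 1 one_mem_W
    rw [mul_one] at h1
    obtain ⟨α, β, hw⟩ := mem_W_iff.mp h1
    set wel : G 𝔽 p q r := α • 1 + β • eTop 𝔽 p q r with hwel
    have hwmem : wel ∈ G0 𝔽 p q r ⊔ Gn 𝔽 p q r := mem_W_iff.mpr ⟨α, β, rfl⟩
    have hiT : involute T = wel * T := by
      have h2 : involute T * Ring.inverse T * T = involute T := by
        rw [mul_assoc, Ring.inverse_mul_cancel _ hT, mul_one]
      rw [← h2, hw]
    have h2 : T = (involute wel * wel) * T := by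
      calc T = involute (involute T) := (involute_involute T).symm
        _ = involute (wel * T) := by rw [← hiT]
        _ = involute wel * involute T := by rw [map_mul]
        _ = (involute wel * wel) * T := by rw [hiT, mul_assoc]
    have h3 : involute wel * wel = 1 := by
      have h4 := congrArg (fun z => z * Ring.inverse T) h2
      simp only [mul_assoc, Ring.mul_inverse_cancel _ hT, mul_one] at h4
      exact h4.symm
    rw [hwel, involute_W_odd hodd, W_expand hsq] at h3
    have h5 : (α*α + -β*β*lam) • (1 : G 𝔽 p q r) + (α*β + -β*α) • eTop 𝔽 p q r
        = (1:𝔽) • 1 + (0:𝔽) • eTop 𝔽 p q r := by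
      rw [h3, one_smul, zero_smul, add_zero]
    obtain ⟨hA, -⟩ := W_coeff hn h5
    by_cases hβ : β = 0
    · -- T itself is even or odd
      rw [hβ] at hA
      have hα1 : α = 1 ∨ α = -1 := by
        have h6 : (α - 1) * (α + 1) = 0 := by linear_combination hA
        rcases mul_eq_zero.mp h6 with h' | h'
        · exact Or.inl (by linear_combination h')
        · exact Or.inr (by linear_combination h')
      have hiT2 : involute T = α • T := by
        rw [hiT, hwel, hβ, zero_smul, add_zero, smul_mul_assoc, one_mul]
      have hepm : T ∈ Epm 𝔽 p q r := by
        rw [mem_Epm_iff]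
        refine ⟨hT, ?_⟩
        rcases hα1 with h' | h'
        · left; rw [hiT2, h', one_smul]
        · right; rw [hiT2, h', neg_smul, one_smul]
      exact Set.mem_mul.mpr ⟨T, hepm, 1,
        ⟨SetLike.mem_coe.mpr one_mem_W, isUnit_one⟩, mul_one T⟩
    · -- construct S
      have main : ∃ S : G 𝔽 p q r, S ∈ G0 𝔽 p q r ⊔ Gn 𝔽 p q r ∧ IsUnit S ∧
          (wel * S = involute S ∨ wel * S = -(involute S)) := by
        by_cases hα : α = -1
        · -- S = 2•1 + β•I, and wel * S = -(involute S)
          rw [hα] at hA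
          have hlb : β*β*lam = 0 := by linear_combination (-1) * hA
          refine ⟨(2:𝔽) • 1 + β • eTop 𝔽 p q r, mem_W_iff.mpr ⟨2, β, rfl⟩, ?_, Or.inr ?_⟩
          · refine ⟨⟨(2:𝔽) • 1 + β • eTop 𝔽 p q r,
              (2⁻¹:𝔽) • 1 + (-(β/4)) • eTop 𝔽 p q r, ?_, ?_⟩, rfl⟩
            · rw [W_expand hsq]
              have c1 : (2:𝔽)*2⁻¹ + β*(-(β/4))*lam = 1 := by
                field_simp
                linear_combination (-1) * hlb
              have c2 : (2:𝔽)*(-(β/4)) + β*2⁻¹ = 0 := by ring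
              rw [c1, c2, zero_smul, add_zero, one_smul]
            · rw [W_expand hsq]
              have c1 : (2⁻¹:𝔽)*2 + (-(β/4))*β*lam = 1 := by
                field_simp
                linear_combination (-1) * hlb
              have c2 : (2⁻¹:𝔽)*β + (-(β/4))*2 = 0 := by ring
              rw [c1, c2, zero_smul, add_zero, one_smul]
          · rw [hwel, hα, involute_W_odd hodd, W_expand hsq]
            have c1 : (-1:𝔽)*2 + β*β*lam = -2 := by linear_combination hlb
            have c2 : (-1:𝔽)*β + β*2 = β := by ring
            rw [c1, c2]
            have : -((2:𝔽) • (1 : G 𝔽 p q r) + -β • eTop 𝔽 p q r)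
                = (-2:𝔽) • 1 + β • eTop 𝔽 p q r := by module
            rw [this]
        · -- S = (α+1)•1 + (−β)•I, and wel * S = involute S
          have hA0 : α + 1 ≠ 0 := fun h => hα (by linear_combination h)
          have hμ : 2*α + 2 ≠ 0 := by
            intro h
            exact hA0 (by linear_combination h / 2)
          refine ⟨(α+1) • 1 + (-β) • eTop 𝔽 p q r, mem_W_iff.mpr ⟨α+1, -β, rfl⟩, ?_, Or.inl ?_⟩
          · refine ⟨⟨(α+1) • 1 + (-β) • eTop 𝔽 p q r,
              ((2*α+2)⁻¹*(α+1)) • 1 + ((2*α+2)⁻¹*β) • eTop 𝔽 p q r, ?_, ?_⟩, rfl⟩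
            · rw [W_expand hsq]
              have c1 : (α+1)*((2*α+2)⁻¹*(α+1)) + (-β)*((2*α+2)⁻¹*β)*lam = 1 := by
                field_simp
                linear_combination hA
              have c2 : (α+1)*((2*α+2)⁻¹*β) + (-β)*((2*α+2)⁻¹*(α+1)) = 0 := by ring
              rw [c1, c2, zero_smul, add_zero, one_smul]
            · rw [W_expand hsq]
              have c1 : ((2*α+2)⁻¹*(α+1))*(α+1) + ((2*α+2)⁻¹*β)*(-β)*lam = 1 := by
                field_simp
                linear_combination hA
              have c2 : ((2*α+2)⁻¹*(α+1))*(-β) + ((2*α+2)⁻¹*β)*(α+1) = 0 := by ring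
              rw [c1, c2, zero_smul, add_zero, one_smul]
          · rw [hwel, involute_W_odd hodd, neg_neg, W_expand hsq]
            have c1 : α*(α+1) + β*(-β)*lam = α+1 := by linear_combination hA
            have c2 : α*(-β) + β*(α+1) = β := by ring
            rw [c1, c2]
      obtain ⟨S, hSW, hSu, hsgn⟩ := main
      have hShu : IsUnit (involute S) := isUnit_involute hSu
      have hShC : ∀ y, Ring.inverse (involute S) * y = y * Ring.inverse (involute S) :=
        central_inv hShu (fun y => W_central hodd (involute_W_mem hSW) y)
      set E := T * Ring.inverse S with hEdef
      have hEu : IsUnit E := hT.mul (isUnit_ring_inverse hSu)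
      have hET : E * S = T := by
        rw [hEdef, mul_assoc, Ring.inverse_mul_cancel _ hSu, mul_one]
      have hstep : involute E = (T * wel) * Ring.inverse (involute S) := by
        rw [hEdef, map_mul, hiT, involute_ring_inverse hSu, W_central hodd hwmem T]
      rcases hsgn with hpos | hneg
      · have hkey : Ring.inverse S = wel * Ring.inverse (involute S) := by
          refine ring_inverse_eq hSu ?_
          rw [mul_assoc, hShC S, ← mul_assoc, hpos, Ring.mul_inverse_cancel _ hShu]
        have hEinv : involute E = E := by
          rw [hstep, mul_assoc, ← hkey, hEdef]
        exact Set.mem_mul.mpr ⟨E, mem_Epm_iff.mpr ⟨hEu, Or.inl hEinv⟩, S,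
          ⟨SetLike.mem_coe.mpr hSW, hSu⟩, hET⟩
      · have hkey : Ring.inverse S = -(wel * Ring.inverse (involute S)) := by
          refine ring_inverse_eq hSu ?_
          rw [neg_mul, mul_assoc, hShC S, ← mul_assoc, hneg, neg_mul, neg_neg,
            Ring.mul_inverse_cancel _ hShu]
        have hEinv : involute E = -E := by
          rw [hstep, mul_assoc, ← neg_neg (wel * Ring.inverse (involute S)), ← hkey, hEdef,
            mul_neg]
        exact Set.mem_mul.mpr ⟨E, mem_Epm_iff.mpr ⟨hEu, Or.inr hEinv⟩, S,
          ⟨SetLike.mem_coe.mpr hSW, hSu⟩, hET⟩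
  · rintro ⟨E, hE, S, hS, rfl⟩
    obtain ⟨hSW, hSu⟩ := hS
    rw [SetLike.mem_coe] at hSW
    obtain ⟨hEu, hEpar⟩ := mem_Epm_iff.mp hE
    refine ⟨hEu.mul hSu, fun U hU => ?_⟩
    have hX : involute (E*S) * U * Ring.inverse (E*S)
        = involute E * (involute S * U * Ring.inverse S) * Ring.inverse E := by
      rw [map_mul, ring_inverse_mul hEu hSu]
      simp only [mul_assoc]
    have hV : involute S * U * Ring.inverse S ∈ G0 𝔽 p q r ⊔ Gn 𝔽 p q r :=
      W_mul_mem (W_mul_mem (involute_W_mem hSW) hU) (W_inverse_mem hn hSu hSW)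
    rw [hX]
    rcases hEpar with he | ho
    · rw [he, conj_of_comm hEu (W_central hodd hV E).symm]
      exact hV
    · rw [ho, neg_mul, neg_mul, conj_of_comm hEu (W_central hodd hV E).symm]
      exact Submodule.neg_mem _ hV

end part3sec
section part2sec
open CliffordAlgebra
variable {𝔽 : Type*} [RCLike 𝔽] {p q r : ℕ}

lemma pr_unit_ne_zero {T : G 𝔽 p q r} (hT : IsUnit T) : pr 𝔽 p q r T ≠ 0 := by
  intro h
  have h1 := hT.map (pr 𝔽 p q r)
  rw [h] at h1
  exact G_nontrivial ((isUnit_zero_iff.mp h1).symm)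

lemma eTop_mem_rad (hr : 1 ≤ r) : eTop 𝔽 p q r ∈ radG 𝔽 p q r := by
  have ha0 : p + q < p + q + r := by omega
  set a0 : Fin (p+q+r) := ⟨p+q, ha0⟩ with ha0def
  obtain ⟨l₁, l₂, hl⟩ := List.append_of_mem (List.mem_finRange a0)
  rw [eTop_eq, hl, eProd_append, eProd_cons]
  refine rad_mul_left ?_ _
  refine rad_mul_right ?_ _
  exact e_null_mem_rad (by rw [ha0def])

lemma eProd_isUnit {l : List (Fin (p+q+r))} (h : ∀ a ∈ l, (a:ℕ) < p + q) :
    IsUnit (eProd 𝔽 p q r l) := by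
  induction l with
  | nil => exact isUnit_one
  | cons b l ih =>
    rw [eProd_cons]
    exact (e_isUnit (h b ((List.mem_cons_self : b ∈ b :: l)))).mul
      (ih (fun a ha => h a (List.mem_cons_of_mem b ha)))

lemma eTop_isUnit (hr : r = 0) : IsUnit (eTop 𝔽 p q r) := by
  rw [eTop_eq]
  refine eProd_isUnit (fun a _ => ?_)
  have := a.isLt
  omega

/-- Part 2 : n even, `Γ^{0n} = (𝒢^{(0)×} ∪ 𝒢^{(1)×})(𝒢⁰ + rad 𝒢)^×`. -/
lemma part2 (hn : 1 ≤ p+q+r) (heven : Even (p+q+r)) :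
    gammaAd 𝔽 p q r (G0 𝔽 p q r ⊔ Gn 𝔽 p q r)
      = Epm 𝔽 p q r * ux 𝔽 p q r ↑(G0 𝔽 p q r ⊔ radG 𝔽 p q r) := by
  obtain ⟨lam, hsq⟩ := eTop_sq (𝔽 := 𝔽) (p := p) (q := q) (r := r)
  ext T
  constructor
  · rintro ⟨hT, hc⟩
    have hI := hc (eTop 𝔽 p q r) eTop_mem_W
    obtain ⟨α, β, hITc⟩ := mem_W_iff.mp hI
    have hTI : T * eTop 𝔽 p q r = (α • 1 + β • eTop 𝔽 p q r) * T := by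
      have h2 : T * eTop 𝔽 p q r * Ring.inverse T * T = T * eTop 𝔽 p q r := by
        rw [mul_assoc, Ring.inverse_mul_cancel _ hT, mul_one]
      rw [← h2, hITc]
    have hsuper : T * eTop 𝔽 p q r = eTop 𝔽 p q r * involute T := by
      have h3 := eTop_mul_super heven (involute T)
      rw [involute_involute] at h3
      exact h3.symm
    have hTne : T ≠ 0 := by
      intro h0
      rw [h0] at hT
      exact G_nontrivial ((isUnit_zero_iff.mp hT).symm)
    by_cases hr : r = 0
    · -- nondegenerate case : eTop is invertible
      have hIu : IsUnit (eTop 𝔽 p q r) := eTop_isUnit hr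
      have e1 : T * eTop 𝔽 p q r * Ring.inverse T * (T * eTop 𝔽 p q r * Ring.inverse T)
          = T * (eTop 𝔽 p q r * eTop 𝔽 p q r) * Ring.inverse T := by
        rw [mul_assoc (T * eTop 𝔽 p q r), ← mul_assoc (Ring.inverse T) (T * eTop 𝔽 p q r),
          ← mul_assoc (Ring.inverse T) T, Ring.inverse_mul_cancel _ hT, one_mul,
          ← mul_assoc, mul_assoc T (eTop 𝔽 p q r) (eTop 𝔽 p q r)]
      have hsq2 : (α • (1 : G 𝔽 p q r) + β • eTop 𝔽 p q r)
          * (α • 1 + β • eTop 𝔽 p q r) = lam • 1 := by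
        rw [← hITc, e1, hsq, mul_smul_comm, mul_one, smul_mul_assoc,
          Ring.mul_inverse_cancel _ hT]
      rw [W_expand hsq] at hsq2
      have h5 : (α*α + β*β*lam) • (1 : G 𝔽 p q r) + (α*β + β*α) • eTop 𝔽 p q r
          = lam • 1 + (0:𝔽) • eTop 𝔽 p q r := by
        rw [hsq2, zero_smul, add_zero]
      obtain ⟨hA, hB⟩ := W_coeff hn h5
      have hαβ : α * β = 0 := by
        have h2ne : (2:𝔽) ≠ 0 := two_ne_zero
        have h6 : (2:𝔽) * (α * β) = 0 := by linear_combination hB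
        rcases mul_eq_zero.mp h6 with h' | h'
        · exact absurd h' h2ne
        · exact h'
      rcases mul_eq_zero.mp hαβ with hα | hβ
      · -- α = 0 : T even or odd
        rw [hα, zero_smul, zero_add, smul_mul_assoc] at hTI
        have hiT : involute T = β • T := by
          have h7 : eTop 𝔽 p q r * (involute T - β • T) = 0 := by
            rw [mul_sub, ← hsuper, hTI, mul_smul_comm, sub_self]
          have h8 : involute T - β • T = 0 := by
            have h9 := congrArg (fun z => Ring.inverse (eTop 𝔽 p q r) * z) h7
            simp only [← mul_assoc, Ring.inverse_mul_cancel _ hIu, one_mul, mul_zero] at h9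
            exact h9
          rw [← sub_eq_zero]
          exact h8
        have hβ2 : β * β = 1 := by
          have h10 : T = (β * β) • T := by
            calc T = involute (involute T) := (involute_involute T).symm
              _ = (β * β) • T := by rw [hiT, map_smul, hiT, smul_smul]
          by_contra hne
          have h11 : (1 - β*β) • T = 0 := by
            rw [sub_smul, one_smul, ← h10, sub_self]
          have h12 : T = 0 := by
            calc T = (1-β*β)⁻¹ • ((1-β*β) • T) := by
                  rw [smul_smul, inv_mul_cancel₀ (sub_ne_zero.mpr (Ne.symm hne)), one_smul]
              _ = 0 := by rw [h11, smul_zero]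
          exact hTne h12
        have hβ1 : β = 1 ∨ β = -1 := by
          have h6 : (β - 1) * (β + 1) = 0 := by linear_combination hβ2
          rcases mul_eq_zero.mp h6 with h' | h'
          · exact Or.inl (by linear_combination h')
          · exact Or.inr (by linear_combination h')
        have hepm : T ∈ Epm 𝔽 p q r := by
          rw [mem_Epm_iff]
          refine ⟨hT, ?_⟩
          rcases hβ1 with h' | h'
          · left; rw [hiT, h', one_smul]
          · right; rw [hiT, h', neg_smul, one_smul]
        exact Set.mem_mul.mpr ⟨T, hepm, 1,
          ⟨SetLike.mem_coe.mpr one_mem_G0rad, isUnit_one⟩, mul_one T⟩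
      · -- β = 0 : contradiction
        exfalso
        rw [hβ, zero_smul, add_zero, smul_mul_assoc, one_mul] at hTI
        have h13 : eTop 𝔽 p q r = α • (1 : G 𝔽 p q r) := by
          have h14 := congrArg (fun z => Ring.inverse T * z) hTI
          simp only [← mul_assoc, Ring.inverse_mul_cancel _ hT, one_mul, mul_smul_comm,
            mul_one] at h14
          exact h14
        have h15 : α • (1 : G 𝔽 p q r) + (-1 : 𝔽) • eTop 𝔽 p q r
            = (0:𝔽) • 1 + (0:𝔽) • eTop 𝔽 p q r := by
          rw [← h13, neg_smul, one_smul, add_neg_cancel, zero_smul, zero_smul, add_zero]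
        obtain ⟨-, hcontra⟩ := W_coeff hn h15
        exact one_ne_zero (neg_eq_zero.mp hcontra)
    · -- degenerate case : r ≥ 1
      have hr1 : 1 ≤ r := Nat.one_le_iff_ne_zero.mpr hr
      have hIrad : eTop 𝔽 p q r ∈ radG 𝔽 p q r := eTop_mem_rad hr1
      have hprI : pr 𝔽 p q r (eTop 𝔽 p q r) = 0 := pr_rad_zero hIrad
      have hprTu : IsUnit (pr 𝔽 p q r T) := hT.map (pr 𝔽 p q r)
      have hα : α = 0 := by
        have h2 := congrArg (pr 𝔽 p q r) hTI
        rw [map_mul, hprI, mul_zero, map_mul, map_add, map_smul, map_smul, hprI, smul_zero,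
          add_zero, map_one, smul_mul_assoc, one_mul] at h2
        by_contra hne
        have h3 : pr 𝔽 p q r T = 0 := by
          calc pr 𝔽 p q r T = α⁻¹ • (α • pr 𝔽 p q r T) := by
                rw [smul_smul, inv_mul_cancel₀ hne, one_smul]
            _ = 0 := by rw [← h2, smul_zero]
        exact pr_unit_ne_zero hT h3
      have hβ : β ≠ 0 := by
        intro h0
        rw [hα, h0, zero_smul, zero_smul, add_zero, zero_mul] at hTI
        have h4 : eTop 𝔽 p q r = 0 := by
          have h5 := congrArg (fun z => Ring.inverse T * z) hTI
          simp only [← mul_assoc, Ring.inverse_mul_cancel _ hT, one_mul, mul_zero] at h5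
          exact h5
        exact eTop_ne_zero h4
      rw [hα, zero_smul, zero_add, smul_mul_assoc] at hTI
      have hρrad : involute T - β • T ∈ radG 𝔽 p q r := by
        apply mem_rad_of_eTop_mul
        rw [mul_sub, mul_smul_comm, ← hsuper, hTI, sub_self]
      set ρ := involute T - β • T with hρ
      have hiT : involute T = β • T + ρ := by rw [hρ]; abel
      have hβ2 : β * β = 1 := by
        by_contra hne
        have h6 : T = (β*β) • T + (β • ρ + involute ρ) := by
          calc T = involute (involute T) := (involute_involute T).symm
            _ = involute (β • T + ρ) := by rw [← hiT]
            _ = β • involute T + involute ρ := by rw [map_add, map_smul]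
            _ = β • (β • T + ρ) + involute ρ := by rw [hiT]
            _ = (β*β) • T + (β • ρ + involute ρ) := by
                rw [smul_add, smul_smul, add_assoc]
        have hTT : (1 - β*β) • T = β • ρ + involute ρ := by
          rw [sub_smul, one_smul]
          nth_rewrite 1 [h6]
          abel
        have hTrad : T ∈ radG 𝔽 p q r := by
          have h7 : T = (1-β*β)⁻¹ • ((1-β*β) • T) := by
            rw [smul_smul, inv_mul_cancel₀ (sub_ne_zero.mpr (Ne.symm hne)), one_smul]
          rw [h7, hTT]
          exact Submodule.smul_mem _ _ (Submodule.add_mem _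
            (Submodule.smul_mem _ _ hρrad) (rad_involute hρrad))
        exact pr_unit_ne_zero hT (pr_rad_zero hTrad)
      have hβ1 : β = 1 ∨ β = -1 := by
        have h6 : (β - 1) * (β + 1) = 0 := by linear_combination hβ2
        rcases mul_eq_zero.mp h6 with h' | h'
        · exact Or.inl (by linear_combination h')
        · exact Or.inr (by linear_combination h')
      have h2inv : (2⁻¹:𝔽) + 2⁻¹ = 1 := by norm_num
      rcases hβ1 with hb | hb
      · -- β = 1 : even part is the unit
        set T0 := (2⁻¹:𝔽) • (T + involute T) with hT0
        set T1 := (2⁻¹:𝔽) • (T - involute T) with hT1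
        have hsum : T0 + T1 = T := by
          have h8 : T0 + T1 = ((2⁻¹:𝔽) + 2⁻¹) • T := by rw [hT0, hT1]; module
          rw [h8, h2inv, one_smul]
        have hT1rad : T1 ∈ radG 𝔽 p q r := by
          have h9 : T - involute T = -ρ := by rw [hiT, hb, one_smul]; abel
          rw [hT1, h9]
          exact Submodule.smul_mem _ _ (Submodule.neg_mem _ hρrad)
        have hT0inv : involute T0 = T0 := by
          rw [hT0, map_smul, map_add, involute_involute]
          module
        have hprT0 : pr 𝔽 p q r T0 = pr 𝔽 p q r T := by
          have h8 := congrArg (pr 𝔽 p q r) hsum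
          rwa [map_add, pr_rad_zero hT1rad, add_zero] at h8
        have hT0u : IsUnit T0 := isUnit_of_pr_isUnit (by rw [hprT0]; exact hprTu)
        have hS1 : Ring.inverse T0 * T = 1 + Ring.inverse T0 * T1 := by
          conv_lhs => rw [← hsum]
          rw [mul_add, Ring.inverse_mul_cancel _ hT0u]
        have hSmem : Ring.inverse T0 * T ∈ G0 𝔽 p q r ⊔ radG 𝔽 p q r := by
          rw [hS1]
          exact Submodule.add_mem _
            (Submodule.mem_sup_left (Submodule.mem_span_singleton_self 1))
            (Submodule.mem_sup_right (rad_mul_left hT1rad _))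
        have hSu : IsUnit (Ring.inverse T0 * T) := by
          rw [hS1]
          exact one_add_rad_isUnit (rad_mul_left hT1rad _)
        have hfin : T0 * (Ring.inverse T0 * T) = T := by
          rw [← mul_assoc, Ring.mul_inverse_cancel _ hT0u, one_mul]
        exact Set.mem_mul.mpr ⟨T0, mem_Epm_iff.mpr ⟨hT0u, Or.inl hT0inv⟩,
          Ring.inverse T0 * T, ⟨SetLike.mem_coe.mpr hSmem, hSu⟩, hfin⟩
      · -- β = -1 : odd part is the unit
        set T0 := (2⁻¹:𝔽) • (T + involute T) with hT0
        set T1 := (2⁻¹:𝔽) • (T - involute T) with hT1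
        have hsum : T1 + T0 = T := by
          have h8 : T1 + T0 = ((2⁻¹:𝔽) + 2⁻¹) • T := by rw [hT0, hT1]; module
          rw [h8, h2inv, one_smul]
        have hT0rad : T0 ∈ radG 𝔽 p q r := by
          have h9 : T + involute T = ρ := by rw [hiT, hb, neg_smul, one_smul]; abel
          rw [hT0, h9]
          exact Submodule.smul_mem _ _ hρrad
        have hT1inv : involute T1 = -T1 := by
          rw [hT1, map_smul, map_sub, involute_involute]
          module
        have hprT1 : pr 𝔽 p q r T1 = pr 𝔽 p q r T := by
          have h8 := congrArg (pr 𝔽 p q r) hsum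
          rwa [map_add, pr_rad_zero hT0rad, add_zero] at h8
        have hT1u : IsUnit T1 := isUnit_of_pr_isUnit (by rw [hprT1]; exact hprTu)
        have hS1 : Ring.inverse T1 * T = 1 + Ring.inverse T1 * T0 := by
          conv_lhs => rw [← hsum]
          rw [mul_add, Ring.inverse_mul_cancel _ hT1u]
        have hSmem : Ring.inverse T1 * T ∈ G0 𝔽 p q r ⊔ radG 𝔽 p q r := by
          rw [hS1]
          exact Submodule.add_mem _
            (Submodule.mem_sup_left (Submodule.mem_span_singleton_self 1))
            (Submodule.mem_sup_right (rad_mul_left hT0rad _))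
        have hSu : IsUnit (Ring.inverse T1 * T) := by
          rw [hS1]
          exact one_add_rad_isUnit (rad_mul_left hT0rad _)
        have hfin : T1 * (Ring.inverse T1 * T) = T := by
          rw [← mul_assoc, Ring.mul_inverse_cancel _ hT1u, one_mul]
        exact Set.mem_mul.mpr ⟨T1, mem_Epm_iff.mpr ⟨hT1u, Or.inr hT1inv⟩,
          Ring.inverse T1 * T, ⟨SetLike.mem_coe.mpr hSmem, hSu⟩, hfin⟩
  · rintro ⟨E, hE, S, hS, rfl⟩
    obtain ⟨hSW, hSu⟩ := hS
    rw [SetLike.mem_coe] at hSW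
    obtain ⟨hEu, hEpar⟩ := mem_Epm_iff.mp hE
    refine ⟨hEu.mul hSu, fun U hU => ?_⟩
    obtain ⟨α, β, rfl⟩ := mem_W_iff.mp hU
    have hX : E * S * (α • 1 + β • eTop 𝔽 p q r) * Ring.inverse (E * S)
        = E * (S * (α • 1 + β • eTop 𝔽 p q r) * Ring.inverse S) * Ring.inverse E := by
      rw [ring_inverse_mul hEu hSu]
      simp only [mul_assoc]
    have hcom : S * (α • 1 + β • eTop 𝔽 p q r) = (α • 1 + β • eTop 𝔽 p q r) * S := by
      rw [mul_add, add_mul, mul_smul_comm, smul_mul_assoc, mul_smul_comm, smul_mul_assoc,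
        mul_one, one_mul, G0rad_comm_eTop hSW]
    rw [hX, conj_of_comm hSu hcom]
    rcases hEpar with he | ho
    · rw [conj_expand, conj_one hEu, conj_of_comm hEu (even_comm_eTop heven he)]
      exact mem_W_iff.mpr ⟨α, β, rfl⟩
    · rw [conj_expand, conj_one hEu, conj_of_anticomm hEu (odd_anticomm_eTop heven ho)]
      refine mem_W_iff.mpr ⟨α, -β, ?_⟩
      rw [smul_neg, ← neg_smul]

end part2sec
/-- The groups `Γ^{0n}` and `Γ̌^{0n}`. -/
theorem stmt19 (hn : 1 ≤ p + q + r) :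
    (Odd (p + q + r) →
      gammaAd 𝔽 p q r (G0 𝔽 p q r ⊔ Gn 𝔽 p q r) = {x : G 𝔽 p q r | IsUnit x}) ∧
    (Even (p + q + r) →
      gammaAd 𝔽 p q r (G0 𝔽 p q r ⊔ Gn 𝔽 p q r) = Epm 𝔽 p q r * ux 𝔽 p q r ↑(G0 𝔽 p q r ⊔ radG 𝔽 p q r)) ∧
    (Odd (p + q + r) →
      gammaTw 𝔽 p q r (G0 𝔽 p q r ⊔ Gn 𝔽 p q r) = Epm 𝔽 p q r * ux 𝔽 p q r ↑(G0 𝔽 p q r ⊔ Gn 𝔽 p q r)) ∧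
    (Even (p + q + r) →
      gammaTw 𝔽 p q r (G0 𝔽 p q r ⊔ Gn 𝔽 p q r) = Epm 𝔽 p q r) := by
  exact ⟨fun h => part1 h, fun h => part2 hn h, fun h => part3 hn h, fun h => part4 hn h⟩

end ClGA
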